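/- arXiv:math-ph/0601027 — 7 statements merged into one kernel-verified Lean document; each statement's English description precedes it below -/
import Mathlib

section
/- Let (P^N) be a sequence of nonzero orthogonal projections that concentrates at x = (x_k)_{k∈K}. Then for every m ≥ 1 and every finite sequence (k_1, …, k_m) of indices from K, the normalized trace expectations of the (generally noncommuting) monomials converge: lim_{N→∞} tr^N(X^N_{k_1} X^N_{k_2} ⋯ X^N_{k_m} | P^N) = x_{k_1} x_{k_2} ⋯ x_{k_m}. -/
open scoped Matrix Matrix.Norms.L2Operator ComplexOrder

/-- `P` is an orthogonal projection matrix. -/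
def IsProjection {d : ℕ} (P : Matrix (Fin d) (Fin d) ℂ) : Prop :=
  P.IsHermitian ∧ P * P = P

/-- `σ` is a density matrix (a state). -/
def IsDensity {d : ℕ} (σ : Matrix (Fin d) (Fin d) ℂ) : Prop :=
  σ.PosSemidef ∧ σ.trace = 1

/-- Expectation of `A` in the state with density matrix `σ`. -/
noncomputable def expVal {d : ℕ} (σ A : Matrix (Fin d) (Fin d) ℂ) : ℂ :=
  (σ * A).trace

/-- Normalized trace state on the range of the projection `P`:
`tr(A | P) = Tr(P A P) / Tr(P)`. -/
noncomputable def condTr {d : ℕ} (P A : Matrix (Fin d) (Fin d) ℂ) : ℂ :=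
  (P * A * P).trace / P.trace

/-- Total functional calculus on matrices: applies `f` to a Hermitian matrix via the
spectral decomposition and returns `0` on non-Hermitian matrices. -/
noncomputable def fc {d : ℕ} (f : ℝ → ℝ) (A : Matrix (Fin d) (Fin d) ℂ) :
    Matrix (Fin d) (Fin d) ℂ :=
  if h : A.IsHermitian then h.cfc f else 0

/-- The spectral projection of a Hermitian matrix onto the Borel set `S ⊆ ℝ`. -/
noncomputable def specProj {d : ℕ} (S : Set ℝ) (A : Matrix (Fin d) (Fin d) ℂ) :
    Matrix (Fin d) (Fin d) ℂ :=
  fc (S.indicator 1) A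

/-- The von Neumann entropy `−Tr(σ log σ)` (with the convention `0 log 0 = 0`,
which is automatic since `Real.log 0 = 0`). -/
noncomputable def vnEntropy {d : ℕ} (σ : Matrix (Fin d) (Fin d) ℂ) : ℝ :=
  -((σ * fc Real.log σ).trace.re)

/-- The quantum relative entropy `Tr(σ (log σ − log σ₀))` of density matrices. -/
noncomputable def relEntropy {d : ℕ} (σ σ₀ : Matrix (Fin d) (Fin d) ℂ) : ℝ :=
  ((σ * (fc Real.log σ - fc Real.log σ₀)).trace.re)

section Seq
variable (d : ℕ → ℕ) {K : Type*} (X : ∀ N, K → Matrix (Fin (d N)) (Fin (d N)) ℂ)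

/-- The sequence of projections `(P N)` concentrates at `x` (written `P^N →mc x`):
each `P N` is a nonzero orthogonal projection and for every index `k` and every
continuous `F : ℝ → ℝ`, `tr(F(X^N_k) | P^N) → F(x_k)`. -/
def ConcProj (P : ∀ N, Matrix (Fin (d N)) (Fin (d N)) ℂ) (x : K → ℝ) : Prop :=
  (∀ N, IsProjection (P N) ∧ P N ≠ 0) ∧
  ∀ (k : K) (F : ℝ → ℝ), Continuous F →
    Filter.Tendsto (fun N => condTr (P N) (fc F (X N k))) Filter.atTop (nhds (F (x k) : ℂ))

/-- Microcanonical H-function: the supremum over sequences of projections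
concentrating at `x` of `limsup (1/N) log Tr(P^N)` (`⊥ = −∞` if none exists). -/
noncomputable def Hmc (x : K → ℝ) : EReal :=
  sSup { h | ∃ P : ∀ N, Matrix (Fin (d N)) (Fin (d N)) ℂ, ConcProj d X P x ∧
    h = Filter.limsup (fun N : ℕ => (((N : ℝ)⁻¹ * Real.log ((P N).trace.re) : ℝ) : EReal))
      Filter.atTop }

/-- A microcanonical macrostate at `x`: a concentrating sequence of projections
attaining the supremum in `Hmc`. -/
def IsMicroMacrostate (P : ∀ N, Matrix (Fin (d N)) (Fin (d N)) ℂ) (x : K → ℝ) : Prop :=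
  ConcProj d X P x ∧
  (Filter.limsup (fun N : ℕ => (((N : ℝ)⁻¹ * Real.log ((P N).trace.re) : ℝ) : EReal))
      Filter.atTop) = Hmc d X x

/-- The sequence of states given by density matrices `(σ N)` concentrates at `x`
(`ω^N → x`): expectations of all noncommutative monomials in the macroscopic
observables converge to the corresponding products of the values `x_k`. -/
def ConcState (σ : ∀ N, Matrix (Fin (d N)) (Fin (d N)) ℂ) (x : K → ℝ) : Prop :=
  (∀ N, IsDensity (σ N)) ∧
  ∀ L : List K,
    Filter.Tendsto (fun N => expVal (σ N) ((L.map (X N)).prod)) Filter.atTop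
      (nhds (((L.map x).prod : ℝ) : ℂ))

/-- The sequence of states `(σ N)` concentrates in the mean at `x` (`ω^N →1 x`). -/
def ConcMean (σ : ∀ N, Matrix (Fin (d N)) (Fin (d N)) ℂ) (x : K → ℝ) : Prop :=
  (∀ N, IsDensity (σ N)) ∧
  ∀ k : K, Filter.Tendsto (fun N => expVal (σ N) (X N k)) Filter.atTop (nhds (x k : ℂ))

/-- Canonical H-function: supremum of `limsup (1/N) 𝓗(ω^N)` over `ω^N → x`. -/
noncomputable def Hcan (x : K → ℝ) : EReal :=
  sSup { h | ∃ σ : ∀ N, Matrix (Fin (d N)) (Fin (d N)) ℂ, ConcState d X σ x ∧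
    h = Filter.limsup (fun N : ℕ => (((N : ℝ)⁻¹ * vnEntropy (σ N) : ℝ) : EReal)) Filter.atTop }

/-- Canonical H-function in the mean: supremum of `limsup (1/N) 𝓗(ω^N)` over `ω^N →1 x`. -/
noncomputable def Hcan1 (x : K → ℝ) : EReal :=
  sSup { h | ∃ σ : ∀ N, Matrix (Fin (d N)) (Fin (d N)) ℂ, ConcMean d X σ x ∧
    h = Filter.limsup (fun N : ℕ => (((N : ℝ)⁻¹ * vnEntropy (σ N) : ℝ) : EReal)) Filter.atTop }

/-- A canonical macrostate at `x`: a sequence of states concentrating in the mean at `x`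
whose entropy density attains the supremum in `Hcan1`. -/
def IsCanMacrostate (σ : ∀ N, Matrix (Fin (d N)) (Fin (d N)) ℂ) (x : K → ℝ) : Prop :=
  ConcMean d X σ x ∧
  (Filter.limsup (fun N : ℕ => (((N : ℝ)⁻¹ * vnEntropy (σ N) : ℝ) : EReal)) Filter.atTop)
    = Hcan1 d X x

/-- Relative canonical H-function with respect to a reference sequence of faithful
states `ρ`: the infimum of `liminf (1/N) 𝓗(ω^N | ρ^N)` over `ω^N →1 x` (`⊤` if none). -/
noncomputable def Hcan1Rel (ρ : ∀ N, Matrix (Fin (d N)) (Fin (d N)) ℂ) (x : K → ℝ) : EReal :=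
  sInf { h | ∃ σ : ∀ N, Matrix (Fin (d N)) (Fin (d N)) ℂ, ConcMean d X σ x ∧
    h = Filter.liminf (fun N : ℕ => (((N : ℝ)⁻¹ * relEntropy (σ N) (ρ N) : ℝ) : EReal))
      Filter.atTop }

end Seq


namespace MonomialAux
variable {D : Type*} [Fintype D]

lemma trace_conjTranspose_mul (M N : Matrix D D ℂ) :
    (Mᴴ * N).trace = ∑ i, ∑ j, (starRingEnd ℂ) (M j i) * N j i := by
  simp [Matrix.trace, Matrix.mul_apply, Matrix.diag, Matrix.conjTranspose_apply]

lemma trace_conjTranspose_mul_self (M : Matrix D D ℂ) :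
    (Mᴴ * M).trace = ((∑ i, ∑ j, ‖M j i‖ ^ 2 : ℝ) : ℂ) := by
  rw [trace_conjTranspose_mul]
  push_cast
  refine Finset.sum_congr rfl fun i _ => Finset.sum_congr rfl fun j _ => ?_
  rw [mul_comm, Complex.mul_conj]
  norm_cast
  rw [Complex.normSq_eq_norm_sq]

/-- Cauchy-Schwarz for the Frobenius inner product. -/
lemma trace_cs (M N : Matrix D D ℂ) :
    ‖(Mᴴ * N).trace‖ ≤
      Real.sqrt ((Mᴴ * M).trace.re) * Real.sqrt ((Nᴴ * N).trace.re) := by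
  let mk : Matrix D D ℂ → EuclideanSpace ℂ (D × D) :=
    fun M => (WithLp.equiv 2 _).symm fun p => M p.2 p.1
  have hins : ∀ (M N : Matrix D D ℂ), (inner ℂ (mk M) (mk N) : ℂ) = (Mᴴ * N).trace := by
    intro M N
    rw [trace_conjTranspose_mul, PiLp.inner_apply, ← Fintype.sum_prod_type']
    refine Finset.sum_congr rfl fun p _ => ?_
    simp only [RCLike.inner_apply]; exact mul_comm _ _
  have h1 : ‖(inner ℂ (mk M) (mk N) : ℂ)‖ ≤ ‖mk M‖ * ‖mk N‖ := norm_inner_le_norm _ _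
  calc ‖(Mᴴ * N).trace‖ ≤ ‖mk M‖ * ‖mk N‖ := by rw [← hins M N]; exact h1
    _ = Real.sqrt ((Mᴴ * M).trace.re) * Real.sqrt ((Nᴴ * N).trace.re) := by
        rw [norm_eq_sqrt_re_inner (𝕜 := ℂ) (mk M), norm_eq_sqrt_re_inner (𝕜 := ℂ) (mk N),
          hins M M, hins N N, RCLike.re_to_complex, RCLike.re_to_complex]

/-- Column-wise operator-norm bound on Frobenius sums. -/
lemma frob_mul_le [DecidableEq D] (B P : Matrix D D ℂ) :
    ∑ i, ∑ j, ‖(B * P) j i‖ ^ 2 ≤ ‖B‖ ^ 2 * ∑ i, ∑ j, ‖P j i‖ ^ 2 := by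
  rw [Finset.mul_sum]
  refine Finset.sum_le_sum fun i _ => ?_
  let xv : EuclideanSpace ℂ D := (WithLp.equiv 2 _).symm fun j => P j i
  have hmv : (EuclideanSpace.equiv D ℂ).symm (B *ᵥ xv) = fun j => (B * P) j i := by
    ext j
    rfl
  have h1 : ‖(EuclideanSpace.equiv D ℂ).symm (B *ᵥ xv)‖ ≤ ‖B‖ * ‖xv‖ :=
    Matrix.l2_opNorm_mulVec B xv
  have h2 : ‖(EuclideanSpace.equiv D ℂ).symm (B *ᵥ xv)‖ ^ 2 ≤ (‖B‖ * ‖xv‖) ^ 2 :=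
    pow_le_pow_left₀ (norm_nonneg _) h1 2
  calc ∑ j, ‖(B * P) j i‖ ^ 2 = ‖(EuclideanSpace.equiv D ℂ).symm (B *ᵥ xv)‖ ^ 2 := by
        rw [EuclideanSpace.norm_eq, Real.sq_sqrt (by positivity), hmv]
    _ ≤ (‖B‖ * ‖xv‖) ^ 2 := h2
    _ = ‖B‖ ^ 2 * ∑ j, ‖P j i‖ ^ 2 := by
        rw [mul_pow, EuclideanSpace.norm_eq, Real.sq_sqrt (by positivity)]
        rfl

end MonomialAux

section ProjLemmas
open MonomialAux
variable {n : ℕ} {P : Matrix (Fin n) (Fin n) ℂ}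

lemma proj_trace_real (hP : IsProjection P) :
    P.trace = ((∑ i, ∑ j, ‖P j i‖ ^ 2 : ℝ) : ℂ) := by
  conv_lhs => rw [← hP.2]
  conv_lhs => rw [show P * P = Pᴴ * P by rw [hP.1.eq]]
  exact trace_conjTranspose_mul_self P

lemma proj_trace_re_pos (hP : IsProjection P) (hne : P ≠ 0) : 0 < P.trace.re := by
  rw [proj_trace_real hP, Complex.ofReal_re]
  have : ∃ j i, P j i ≠ 0 := by
    by_contra h
    push_neg at h
    exact hne (by ext j i; simpa using h j i)
  obtain ⟨j0, i0, hj⟩ := this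
  refine Finset.sum_pos' (fun i _ => Finset.sum_nonneg fun j _ => by positivity) ?_
  refine ⟨i0, Finset.mem_univ _, Finset.sum_pos' (fun j _ => by positivity) ?_⟩
  exact ⟨j0, Finset.mem_univ _, pow_pos (norm_pos_iff.mpr hj) 2⟩

lemma proj_trace_ofReal (hP : IsProjection P) : P.trace = ((P.trace.re : ℝ) : ℂ) := by
  rw [proj_trace_real hP, Complex.ofReal_re]

lemma condTr_one (hP : IsProjection P) (hne : P ≠ 0) : condTr P 1 = 1 := by
  have ht := proj_trace_re_pos hP hne
  have : P.trace ≠ 0 := by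
    rw [proj_trace_ofReal hP]
    exact_mod_cast ne_of_gt ht
  rw [condTr, Matrix.mul_one, hP.2, div_self this]

lemma condTr_add (P M N : Matrix (Fin n) (Fin n) ℂ) :
    condTr P (M + N) = condTr P M + condTr P N := by
  rw [condTr, condTr, condTr, Matrix.mul_add, Matrix.add_mul, Matrix.trace_add, add_div]

lemma condTr_smul (P M : Matrix (Fin n) (Fin n) ℂ) (r : ℝ) :
    condTr P (r • M) = (r : ℂ) * condTr P M := by
  rw [condTr, condTr, Matrix.mul_smul, Matrix.smul_mul, Matrix.trace_smul, smul_div_assoc,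
    Complex.real_smul]

/-- The key Cauchy-Schwarz estimate for the conditional trace. -/
lemma condTr_bound (B : Matrix (Fin n) (Fin n) ℂ) {A : Matrix (Fin n) (Fin n) ℂ}
    (hP : IsProjection P) (hne : P ≠ 0) (hA : A.IsHermitian) :
    ‖condTr P (A * B)‖ ≤ Real.sqrt ((condTr P (A * A)).re) * ‖B‖ := by
  have ht : 0 < P.trace.re := proj_trace_re_pos hP hne
  set t := P.trace.re with htdef
  set s := (P * (A * A) * P).trace.re with hsdef
  have hfact : P * (A * B) * P = (A * P)ᴴ * (B * P) := by
    rw [Matrix.conjTranspose_mul, hA.eq, hP.1.eq]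
    noncomm_ring
  have hfact2 : (A * P)ᴴ * (A * P) = P * (A * A) * P := by
    rw [Matrix.conjTranspose_mul, hA.eq, hP.1.eq]
    noncomm_ring
  have hs0 : 0 ≤ s := by
    rw [hsdef, ← hfact2, trace_conjTranspose_mul_self, Complex.ofReal_re]
    positivity
  have hsum : t = ∑ i, ∑ j, ‖P j i‖ ^ 2 := by
    rw [htdef, proj_trace_real hP, Complex.ofReal_re]
  have hBP : ((B * P)ᴴ * (B * P)).trace.re ≤ ‖B‖ ^ 2 * t := by
    rw [trace_conjTranspose_mul_self, Complex.ofReal_re, hsum]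
    exact frob_mul_le B P
  have h1 : ‖(P * (A * B) * P).trace‖ ≤ Real.sqrt s * (‖B‖ * Real.sqrt t) := by
    rw [hfact]
    refine (trace_cs _ _).trans ?_
    rw [hfact2]
    refine mul_le_mul_of_nonneg_left ?_ (Real.sqrt_nonneg _)
    refine (Real.sqrt_le_sqrt hBP).trans ?_
    rw [Real.sqrt_mul (sq_nonneg _), Real.sqrt_sq (norm_nonneg _)]
  have hcond : condTr P (A * B) = (P * (A * B) * P).trace / (t : ℂ) := by
    rw [condTr, proj_trace_ofReal hP]
  have hcond2 : (condTr P (A * A)).re = s / t := by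
    rw [condTr, proj_trace_ofReal hP, Complex.div_ofReal_re]
  rw [hcond, hcond2, norm_div, Complex.norm_real, Real.norm_eq_abs, abs_of_pos ht]
  refine (div_le_div_of_nonneg_right h1 ht.le).trans_eq ?_
  have hst : Real.sqrt t ≠ 0 := ne_of_gt (Real.sqrt_pos.mpr ht)
  rw [Real.sqrt_div hs0]
  field_simp
  linear_combination Real.sqrt s * ‖B‖ * Real.mul_self_sqrt ht.le

end ProjLemmas

section FcLemmas
variable {n : ℕ} {A : Matrix (Fin n) (Fin n) ℂ}

lemma fc_eq_cfc (hA : A.IsHermitian) (f : ℝ → ℝ) : fc f A = cfc f A := by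
  rw [fc, dif_pos hA, Matrix.IsHermitian.cfc_eq]

lemma cfc_sub_const (hA : A.IsHermitian) (c : ℝ) :
    cfc (fun t : ℝ => t - c) A = A - c • 1 := by
  have h : IsSelfAdjoint A := hA
  rw [cfc_sub (fun t : ℝ => t) (fun _ : ℝ => c) A, cfc_id' ℝ A, cfc_const c A h,
    Algebra.algebraMap_eq_smul_one]

lemma sub_const_isHermitian (hA : A.IsHermitian) (c : ℝ) : (A - c • 1).IsHermitian := by
  rw [← cfc_sub_const hA c]
  exact cfc_predicate _ A

lemma fc_sub_sq (hA : A.IsHermitian) (c : ℝ) :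
    fc (fun t : ℝ => (t - c) ^ 2) A = (A - c • 1) * (A - c • 1) := by
  have h : IsSelfAdjoint A := hA
  rw [fc_eq_cfc hA, cfc_pow (fun t : ℝ => t - c) 2 A, cfc_sub_const hA c, sq]

end FcLemmas

lemma list_prod_bound (d : ℕ → ℕ) {K : Type*} (X : ∀ N, K → Matrix (Fin (d N)) (Fin (d N)) ℂ)
    (hbdd : ∀ k, ∃ C : ℝ, ∀ N, ‖X N k‖ ≤ C) (hd : ∀ N, Nonempty (Fin (d N))) :
    ∀ L : List K, ∃ C : ℝ, 0 ≤ C ∧ ∀ N, ‖(L.map (X N)).prod‖ ≤ C := by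
  intro L
  induction L with
  | nil =>
    refine ⟨1, zero_le_one, fun N => ?_⟩
    haveI := hd N
    haveI : Nontrivial (Matrix (Fin (d N)) (Fin (d N)) ℂ) := Matrix.nonempty
    simp [CStarRing.norm_one]
  | cons k L ih =>
    obtain ⟨C1, hC1⟩ := hbdd k
    obtain ⟨C2, hC20, hC2⟩ := ih
    have hC10 : 0 ≤ C1 := le_trans (norm_nonneg _) (hC1 0)
    refine ⟨C1 * C2, mul_nonneg hC10 hC20, fun N => ?_⟩
    rw [List.map_cons, List.prod_cons]
    exact (norm_mul_le _ _).trans (mul_le_mul (hC1 N) (hC2 N) (norm_nonneg _) hC10)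

/-- If a sequence of nonzero orthogonal projections concentrates at
`x`, then the normalized trace expectations of all (generally noncommuting) monomials
`X^N_{k_1} ⋯ X^N_{k_m}` (`m ≥ 1`) converge to `x_{k_1} ⋯ x_{k_m}`. -/
theorem monomial_concentration
    (d : ℕ → ℕ) {K : Type*} (X : ∀ N, K → Matrix (Fin (d N)) (Fin (d N)) ℂ)
    (hherm : ∀ N k, (X N k).IsHermitian)
    (hbdd : ∀ k, ∃ C : ℝ, ∀ N, ‖X N k‖ ≤ C)
    (P : ∀ N, Matrix (Fin (d N)) (Fin (d N)) ℂ) (x : K → ℝ)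
    (hP : ConcProj d X P x) :
    ∀ (m : ℕ), 1 ≤ m → ∀ k : Fin m → K,
      Filter.Tendsto
        (fun N => condTr (P N) ((List.ofFn fun i => X N (k i)).prod))
        Filter.atTop (nhds ((∏ i, x (k i) : ℝ) : ℂ)) := by
  obtain ⟨hPproj, hPconc⟩ := hP
  have hd : ∀ N, Nonempty (Fin (d N)) := by
    intro N
    rcases (d N).eq_zero_or_pos with h | h
    · exfalso
      haveI : IsEmpty (Fin (d N)) := by rw [h]; infer_instance
      exact (hPproj N).2 (Subsingleton.elim _ _)
    · exact ⟨⟨0, h⟩⟩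
  have claim : ∀ L : List K,
      Filter.Tendsto (fun N => condTr (P N) ((L.map (X N)).prod)) Filter.atTop
        (nhds (((L.map x).prod : ℝ) : ℂ)) := by
    intro L
    induction L with
    | nil =>
      have heq : (fun N => condTr (P N) (([].map (X N)).prod)) = fun _ => (1 : ℂ) := by
        funext N
        simp only [List.map_nil, List.prod_nil]
        exact condTr_one (hPproj N).1 (hPproj N).2
      rw [heq]
      simp only [List.map_nil, List.prod_nil, Complex.ofReal_one]
      exact tendsto_const_nhds
    | cons k0 L ih =>
      set c := x k0 with hc
      obtain ⟨CB, hCB0, hCB⟩ := list_prod_bound d X hbdd hd L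
      -- the centered observable
      set A' : ∀ N, Matrix (Fin (d N)) (Fin (d N)) ℂ := fun N => X N k0 - c • 1 with hA'
      have hA'herm : ∀ N, (A' N).IsHermitian := fun N => sub_const_isHermitian (hherm N k0) c
      -- concentration of the square
      have hF : Continuous (fun t : ℝ => (t - c) ^ 2) := by fun_prop
      have h0 := hPconc k0 (fun t : ℝ => (t - c) ^ 2) hF
      have h0' : Filter.Tendsto (fun N => condTr (P N) (A' N * A' N)) Filter.atTop
          (nhds (0 : ℂ)) := by
        have heq : (fun N => condTr (P N) (fc (fun t : ℝ => (t - c) ^ 2) (X N k0)))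
            = fun N => condTr (P N) (A' N * A' N) := by
          funext N
          rw [fc_sub_sq (hherm N k0) c]
        rw [heq] at h0
        simpa [hc] using h0
      have hre : Filter.Tendsto (fun N => (condTr (P N) (A' N * A' N)).re) Filter.atTop
          (nhds (0 : ℝ)) := by
        have := (Complex.continuous_re.tendsto (0 : ℂ)).comp h0'
        simpa [Function.comp_def] using this
      have hsq : Filter.Tendsto
          (fun N => Real.sqrt ((condTr (P N) (A' N * A' N)).re) * CB) Filter.atTop
          (nhds (0 : ℝ)) := by
        have := ((Real.continuous_sqrt.tendsto (0 : ℝ)).comp hre).mul_const CB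
        simpa [Function.comp_def] using this
      -- vanishing of the centered term
      have hmain0 : Filter.Tendsto (fun N => condTr (P N) (A' N * (L.map (X N)).prod))
          Filter.atTop (nhds (0 : ℂ)) := by
        refine squeeze_zero_norm (fun N => ?_) hsq
        refine (condTr_bound _ (hPproj N).1 (hPproj N).2 (hA'herm N)).trans ?_
        exact mul_le_mul_of_nonneg_left (hCB N) (Real.sqrt_nonneg _)
      -- decomposition
      have hdecomp : (fun N => condTr (P N) (((k0 :: L).map (X N)).prod))
          = fun N => condTr (P N) (A' N * (L.map (X N)).prod)
            + (c : ℂ) * condTr (P N) ((L.map (X N)).prod) := by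
        funext N
        rw [List.map_cons, List.prod_cons]
        have : X N k0 * (L.map (X N)).prod
            = A' N * (L.map (X N)).prod + c • (L.map (X N)).prod := by
          rw [hA']
          rw [Matrix.sub_mul, Matrix.smul_mul, Matrix.one_mul]
          abel
        rw [this, condTr_add, condTr_smul]
      rw [hdecomp]
      have := hmain0.add (ih.const_mul (c : ℂ))
      simpa [List.map_cons, List.prod_cons, mul_comm] using this
  intro m _ k
  have := claim (List.ofFn k)
  have heq : ∀ N, ((List.ofFn k).map (X N)).prod = (List.ofFn fun i => X N (k i)).prod := by
    intro N
    rw [List.map_ofFn]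
    rfl
  have heq2 : ((List.ofFn k).map x).prod = ∏ i, x (k i) := by
    rw [List.map_ofFn, List.prod_ofFn]
    rfl
  have e1 : (fun N => condTr (P N) ((List.ofFn fun i => X N (k i)).prod))
      = fun N => condTr (P N) (((List.ofFn k).map (X N)).prod) :=
    funext fun N => by rw [heq]
  have e2 : ((∏ i, x (k i) : ℝ) : ℂ) = ((((List.ofFn k).map x).prod : ℝ) : ℂ) := by rw [heq2]
  rw [e1, e2]
  exact this
end

section
/- Let (ω^N) be a sequence of states on d_N × d_N complex matrices, let (Y^N) be matrices with sup_N ‖Y^N‖ < ∞ and ω^N(Y^N) → y, and let (X^N) be Hermitian matrices with ω^N(X^N) → x and ω^N((X^N)²) → x². Then ω^N(Y^N X^N) → y·x. -/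
open scoped Matrix Matrix.Norms.L2Operator ComplexOrder

section AuxCS
open scoped MatrixOrder
variable {n : Type*} [Fintype n] [DecidableEq n]

omit [DecidableEq n] in
lemma traceA (M : Matrix n n ℂ) :
    (Mᴴ * M).trace.re = ∑ j, ∑ i, ‖M i j‖ ^ 2 := by
  simp only [Matrix.trace, Matrix.diag, Matrix.mul_apply, Matrix.conjTranspose_apply,
    Complex.re_sum]
  congr 1; ext j; congr 1; ext i
  simp [Complex.mul_re, Complex.sq_norm, Complex.normSq_apply]


omit [DecidableEq n] in
lemma traceCS (M N : Matrix n n ℂ) :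
    ‖(M * N).trace‖ ^ 2 ≤ (Mᴴ * M).trace.re * (Nᴴ * N).trace.re := by
  classical
  set u : EuclideanSpace ℂ (n × n) := WithLp.toLp 2 (fun p : n × n => (starRingEnd ℂ) (M p.1 p.2)) with hu
  set v : EuclideanSpace ℂ (n × n) := WithLp.toLp 2 (fun p : n × n => N p.2 p.1) with hv
  have h1 : (M * N).trace = inner ℂ u v := by
    simp only [PiLp.inner_apply, RCLike.inner_apply, hu, hv, PiLp.toLp_apply, starRingEnd_self_apply,
      Matrix.trace, Matrix.diag, Matrix.mul_apply]
    rw [← Finset.sum_product']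
    exact Finset.sum_congr rfl fun p _ => mul_comm _ _
  have h2 : ‖u‖ ^ 2 = (Mᴴ * M).trace.re := by
    rw [traceA, EuclideanSpace.norm_eq, Real.sq_sqrt (by positivity),
      ← Finset.sum_product', Finset.univ_product_univ]
    simp only [hu, PiLp.toLp_apply, RCLike.norm_conj]
    exact Fintype.sum_equiv (Equiv.prodComm n n) _ _ (fun p => rfl)
  have h3 : ‖v‖ ^ 2 = (Nᴴ * N).trace.re := by
    rw [traceA, EuclideanSpace.norm_eq, Real.sq_sqrt (by positivity),
      ← Finset.sum_product', Finset.univ_product_univ]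
  rw [h1, ← h2, ← h3]
  calc ‖(inner ℂ u v : ℂ)‖ ^2 ≤ (‖u‖*‖v‖)^2 :=
        pow_le_pow_left₀ (norm_nonneg _) (norm_inner_le_norm (𝕜 := ℂ) u v) 2
    _ = ‖u‖^2 * ‖v‖^2 := by ring

lemma expVal_cs {σ : Matrix n n ℂ} (hσ : σ.PosSemidef) (A B : Matrix n n ℂ) :
    ‖(σ * (A * B)).trace‖ ^ 2 ≤ (σ * (A * Aᴴ)).trace.re * (σ * (Bᴴ * B)).trace.re := by
  set s := CFC.sqrt σ with hsdef
  have hs : s * s = σ := CFC.sqrt_mul_sqrt_self σ hσ.nonneg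
  have hsh : sᴴ = s := (Matrix.nonneg_iff_posSemidef.mp (CFC.sqrt_nonneg σ)).1
  have e1 : ((s * A) * (B * s)).trace = (σ * (A * B)).trace := by
    rw [show (s * A) * (B * s) = s * (A * B) * s from by simp [mul_assoc],
      Matrix.trace_mul_cycle s (A * B) s, hs]
  have e2 : ((s * A)ᴴ * (s * A)).trace = (σ * (A * Aᴴ)).trace := by
    rw [Matrix.conjTranspose_mul, hsh,
      show Aᴴ * s * (s * A) = Aᴴ * (s * s) * A from by simp [mul_assoc], hs,
      Matrix.trace_mul_cycle Aᴴ σ A, Matrix.trace_mul_comm]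
  have e3 : ((B * s)ᴴ * (B * s)).trace = (σ * (Bᴴ * B)).trace := by
    rw [Matrix.conjTranspose_mul, hsh,
      show s * Bᴴ * (B * s) = s * (Bᴴ * B) * s from by simp [mul_assoc],
      Matrix.trace_mul_cycle s (Bᴴ * B) s, hs]
  rw [← e1, ← e2, ← e3]
  exact traceCS (s * A) (B * s)

lemma expVal_sq_nonneg {σ : Matrix n n ℂ} (hσ : σ.PosSemidef) (B : Matrix n n ℂ) :
    0 ≤ (σ * (Bᴴ * B)).trace.re := by
  set s := CFC.sqrt σ with hsdef
  have hs : s * s = σ := CFC.sqrt_mul_sqrt_self σ hσ.nonneg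
  have hsh : sᴴ = s := (Matrix.nonneg_iff_posSemidef.mp (CFC.sqrt_nonneg σ)).1
  have e3 : ((B * s)ᴴ * (B * s)).trace = (σ * (Bᴴ * B)).trace := by
    rw [Matrix.conjTranspose_mul, hsh,
      show s * Bᴴ * (B * s) = s * (Bᴴ * B) * s from by simp [mul_assoc],
      Matrix.trace_mul_cycle s (Bᴴ * B) s, hs]
  rw [← e3, traceA]
  positivity

lemma expVal_opnorm_bound {σ : Matrix n n ℂ} (hσ : σ.PosSemidef) (htr : σ.trace = 1)
    (Y : Matrix n n ℂ) : (σ * (Y * Yᴴ)).trace.re ≤ ‖Y‖ ^ 2 := by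
  set s := CFC.sqrt σ with hsdef
  have hs : s * s = σ := CFC.sqrt_mul_sqrt_self σ hσ.nonneg
  have hsh : sᴴ = s := (Matrix.nonneg_iff_posSemidef.mp (CFC.sqrt_nonneg σ)).1
  have e : (σ * (Y * Yᴴ)).trace = ((Yᴴ * s)ᴴ * (Yᴴ * s)).trace := by
    rw [Matrix.conjTranspose_mul, Matrix.conjTranspose_conjTranspose, hsh,
      show (s * Y) * (Yᴴ * s) = s * (Y * Yᴴ) * s from by simp [mul_assoc],
      Matrix.trace_mul_cycle s (Y * Yᴴ) s, hs]
  rw [e, traceA]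
  have col : ∀ j, ∑ i, ‖(Yᴴ * s) i j‖ ^ 2 ≤ ‖Y‖ ^ 2 * ∑ i, ‖s i j‖ ^ 2 := by
    intro j
    set xv : EuclideanSpace ℂ n := (EuclideanSpace.equiv n ℂ).symm (fun k => s k j) with hxv
    have hv := Matrix.l2_opNorm_mulVec Yᴴ xv
    rw [Matrix.l2_opNorm_conjTranspose] at hv
    have h1 : ∑ i, ‖(Yᴴ * s) i j‖ ^ 2
        = ‖(EuclideanSpace.equiv n ℂ).symm (Yᴴ *ᵥ xv)‖ ^ 2 := by
      rw [EuclideanSpace.norm_eq, Real.sq_sqrt (by positivity)]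
      refine Finset.sum_congr rfl fun i _ => ?_
      congr 1
    have h2 : ‖xv‖ ^ 2 = ∑ i, ‖s i j‖ ^ 2 := by
      rw [EuclideanSpace.norm_eq, Real.sq_sqrt (by positivity)]
      rfl
    rw [h1, ← h2]
    calc ‖(EuclideanSpace.equiv n ℂ).symm (Yᴴ *ᵥ xv)‖ ^ 2 ≤ (‖Y‖ * ‖xv‖) ^ 2 :=
          pow_le_pow_left₀ (norm_nonneg _) hv 2
      _ = ‖Y‖ ^ 2 * ‖xv‖ ^ 2 := by ring
  calc ∑ j, ∑ i, ‖(Yᴴ * s) i j‖ ^ 2 ≤ ∑ j, ‖Y‖ ^ 2 * ∑ i, ‖s i j‖ ^ 2 :=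
        Finset.sum_le_sum fun j _ => col j
    _ = ‖Y‖ ^ 2 * ∑ j, ∑ i, ‖s i j‖ ^ 2 := by rw [Finset.mul_sum]
    _ = ‖Y‖ ^ 2 * (sᴴ * s).trace.re := by rw [traceA]
    _ = ‖Y‖ ^ 2 := by rw [hsh, hs, htr]; simp

end AuxCS

/-- The induction step: if `ω^N(Y^N) → y` with `(Y^N)` uniformly
bounded, and `ω^N(X^N) → x`, `ω^N((X^N)²) → x²` for Hermitian `X^N`, then
`ω^N(Y^N X^N) → y·x`. -/
theorem product_concentration_step
    (d : ℕ → ℕ) (σ Y X : ∀ N, Matrix (Fin (d N)) (Fin (d N)) ℂ)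
    (hσ : ∀ N, IsDensity (σ N))
    (hYbdd : ∃ C : ℝ, ∀ N, ‖Y N‖ ≤ C)
    (y : ℂ) (hY : Filter.Tendsto (fun N => expVal (σ N) (Y N)) Filter.atTop (nhds y))
    (hXherm : ∀ N, (X N).IsHermitian) (x : ℝ)
    (hX1 : Filter.Tendsto (fun N => expVal (σ N) (X N)) Filter.atTop (nhds (x : ℂ)))
    (hX2 : Filter.Tendsto (fun N => expVal (σ N) (X N * X N)) Filter.atTop
      (nhds ((x ^ 2 : ℝ) : ℂ))) :
    Filter.Tendsto (fun N => expVal (σ N) (Y N * X N)) Filter.atTop (nhds (y * x)) := by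
  obtain ⟨C, hC⟩ := hYbdd
  have hC0 : 0 ≤ C := le_trans (norm_nonneg (Y 0)) (hC 0)
  set Z : ∀ N, Matrix (Fin (d N)) (Fin (d N)) ℂ := fun N => X N - (x : ℂ) • 1 with hZ
  have hZherm : ∀ N, (Z N)ᴴ = Z N := by
    intro N
    simp [hZ, Matrix.conjTranspose_sub, (hXherm N).eq, Matrix.conjTranspose_smul,
      Complex.conj_ofReal]
  -- decomposition of the expectation
  have hsplit : ∀ N, expVal (σ N) (Y N * X N)
      = expVal (σ N) (Y N * Z N) + (x : ℂ) * expVal (σ N) (Y N) := by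
    intro N
    simp only [hZ, expVal, mul_sub, Matrix.mul_smul, mul_one, Matrix.trace_sub,
      Matrix.trace_smul, smul_eq_mul]
    ring
  -- the variance term
  have hZZ : ∀ N, expVal (σ N) (Z N * Z N)
      = expVal (σ N) (X N * X N) - 2 * (x : ℂ) * expVal (σ N) (X N) + (x : ℂ) ^ 2 := by
    intro N
    have htr1 : (σ N).trace = 1 := (hσ N).2
    simp only [hZ, expVal, sub_mul, mul_sub, smul_mul_assoc, Matrix.mul_smul,
      mul_one, one_mul, smul_smul, Matrix.trace_sub, Matrix.trace_smul, smul_eq_mul, htr1]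
    ring_nf
  -- the variance tends to zero
  have hvar : Filter.Tendsto (fun N => expVal (σ N) (Z N * Z N)) Filter.atTop (nhds 0) := by
    have h := (hX2.sub ((hX1.const_mul (2 * (x : ℂ))))).add
      (tendsto_const_nhds (x := ((x : ℂ) ^ 2)))
    have hlim : ((x ^ 2 : ℝ) : ℂ) - 2 * (x : ℂ) * (x : ℂ) + (x : ℂ) ^ 2 = 0 := by
      push_cast; ring
    rw [hlim] at h
    refine h.congr fun N => ?_
    rw [hZZ N]
  have hre : Filter.Tendsto (fun N => (expVal (σ N) (Z N * Z N)).re) Filter.atTop (nhds 0) := by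
    have := (Complex.continuous_re.tendsto 0).comp hvar
    simpa [Function.comp_def] using this
  -- the cross term tends to zero
  have hcross : Filter.Tendsto (fun N => expVal (σ N) (Y N * Z N)) Filter.atTop (nhds 0) := by
    rw [tendsto_zero_iff_norm_tendsto_zero]
    have hbound : ∀ N, ‖expVal (σ N) (Y N * Z N)‖
        ≤ Real.sqrt (C ^ 2 * (expVal (σ N) (Z N * Z N)).re) := by
      intro N
      have hps := (hσ N).1
      have hcs := expVal_cs hps (Y N) (Z N)
      have hzz : (Z N)ᴴ * Z N = Z N * Z N := by rw [hZherm N]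
      rw [hzz] at hcs
      have hr0 : 0 ≤ ((σ N) * (Z N * Z N)).trace.re := by
        rw [← hzz]; exact expVal_sq_nonneg hps (Z N)
      have hyb : ((σ N) * (Y N * (Y N)ᴴ)).trace.re ≤ C ^ 2 :=
        le_trans (expVal_opnorm_bound hps (hσ N).2 (Y N))
          (pow_le_pow_left₀ (norm_nonneg _) (hC N) 2)
      have h2 : ‖expVal (σ N) (Y N * Z N)‖ ^ 2
          ≤ C ^ 2 * (expVal (σ N) (Z N * Z N)).re :=
        le_trans hcs (mul_le_mul_of_nonneg_right hyb hr0)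
      have := Real.sqrt_le_sqrt h2
      rwa [Real.sqrt_sq (norm_nonneg _)] at this
    refine squeeze_zero (fun N => norm_nonneg _) hbound ?_
    have : Filter.Tendsto (fun N => C ^ 2 * (expVal (σ N) (Z N * Z N)).re)
        Filter.atTop (nhds 0) := by
      have := hre.const_mul (C ^ 2)
      simpa using this
    have hsq := (Real.continuous_sqrt.tendsto 0).comp this
    simpa [Function.comp_def] using hsq
  -- assemble
  have h := hcross.add (hY.const_mul (x : ℂ))
  rw [zero_add] at h
  have hfin : (x : ℂ) * y = y * (x : ℂ) := mul_comm _ _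
  rw [hfin] at h
  exact h.congr fun N => (hsplit N).symm
end

section
/- Let (P^N) be a sequence of nonzero orthogonal projections concentrating at x = (x_k)_{k∈K}. Then for every finite subset R = {k_1, …, k_r} ⊆ K, every complex numbers λ_{k_1}, …, λ_{k_r}, and every fixed ordering of the factors, lim_{N→∞} tr^N( e^{λ_{k_1}(X^N_{k_1} − x_{k_1})} e^{λ_{k_2}(X^N_{k_2} − x_{k_2})} ⋯ e^{λ_{k_r}(X^N_{k_r} − x_{k_r})} | P^N ) = 1, where e^{M} is the matrix exponential. -/
open scoped Matrix Matrix.Norms.L2Operator ComplexOrder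

namespace ExpConc
variable {d : ℕ}

lemma trace_conjTranspose_mul_self_re (W : Matrix (Fin d) (Fin d) ℂ) :
    (Wᴴ * W).trace.re = ∑ p : Fin d × Fin d, ‖W p.1 p.2‖ ^ 2 := by
  rw [Matrix.trace]
  rw [Complex.re_sum]
  rw [Fintype.sum_prod_type]
  rw [Finset.sum_comm]
  refine Finset.sum_congr rfl fun j _ => ?_
  simp only [Matrix.diag_apply, Matrix.mul_apply, Matrix.conjTranspose_apply]
  rw [Complex.re_sum]
  refine Finset.sum_congr rfl fun i _ => ?_
  have : star (W i j) * W i j = ((Complex.normSq (W i j) : ℝ) : ℂ) := by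
    rw [mul_comm]; exact Complex.mul_conj _
  rw [this, Complex.ofReal_re, Complex.normSq_eq_norm_sq]

lemma abs_trace_conjTranspose_mul_le (U V : Matrix (Fin d) (Fin d) ℂ) :
    ‖(Uᴴ * V).trace‖ ≤ Real.sqrt ((Uᴴ * U).trace.re) * Real.sqrt ((Vᴴ * V).trace.re) := by
  set u : EuclideanSpace ℂ (Fin d × Fin d) := WithLp.toLp 2 (fun p : Fin d × Fin d => U p.1 p.2) with hu
  set v : EuclideanSpace ℂ (Fin d × Fin d) := WithLp.toLp 2 (fun p : Fin d × Fin d => V p.1 p.2) with hv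
  have h1 : (Uᴴ * V).trace = inner (𝕜 := ℂ) u v := by
    rw [PiLp.inner_apply, Matrix.trace, Fintype.sum_prod_type, Finset.sum_comm]
    refine Finset.sum_congr rfl fun j _ => ?_
    simp only [Matrix.diag_apply, Matrix.mul_apply, Matrix.conjTranspose_apply]
    refine Finset.sum_congr rfl fun i _ => ?_
    simp [hu, hv, RCLike.inner_apply, mul_comm]
  have hU : Real.sqrt ((Uᴴ * U).trace.re) = ‖u‖ := by
    rw [trace_conjTranspose_mul_self_re, EuclideanSpace.norm_eq]
  have hV : Real.sqrt ((Vᴴ * V).trace.re) = ‖v‖ := by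
    rw [trace_conjTranspose_mul_self_re, EuclideanSpace.norm_eq]
  rw [h1, hU, hV]
  exact norm_inner_le_norm u v

lemma col_bound (M W : Matrix (Fin d) (Fin d) ℂ) (j : Fin d) :
    ∑ i, ‖(M * W) i j‖ ^ 2 ≤ ‖M‖ ^ 2 * ∑ i, ‖W i j‖ ^ 2 := by
  set w : EuclideanSpace ℂ (Fin d) := WithLp.toLp 2 (fun i => W i j) with hw
  have h1 : ∑ i, ‖(M * W) i j‖ ^ 2 = ‖(EuclideanSpace.equiv (Fin d) ℂ).symm (M *ᵥ w)‖ ^ 2 := by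
    rw [EuclideanSpace.norm_eq, Real.sq_sqrt (by positivity)]
    refine Finset.sum_congr rfl fun i _ => ?_
    simp [Matrix.mul_apply, Matrix.mulVec, dotProduct, hw, EuclideanSpace.equiv]
  have h2 : ∑ i, ‖W i j‖ ^ 2 = ‖w‖ ^ 2 := by
    rw [EuclideanSpace.norm_eq, Real.sq_sqrt (by positivity)]
  rw [h1, h2]
  calc ‖(EuclideanSpace.equiv (Fin d) ℂ).symm (M *ᵥ w)‖ ^ 2 ≤ (‖M‖ * ‖w‖) ^ 2 := by
        have := Matrix.l2_opNorm_mulVec M w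
        have h0 : (0:ℝ) ≤ ‖(EuclideanSpace.equiv (Fin d) ℂ).symm (M *ᵥ w)‖ := norm_nonneg _
        nlinarith
    _ = ‖M‖ ^ 2 * ‖w‖ ^ 2 := by ring

lemma trace_mul_re_le (M W : Matrix (Fin d) (Fin d) ℂ) :
    ((M * W)ᴴ * (M * W)).trace.re ≤ ‖M‖ ^ 2 * (Wᴴ * W).trace.re := by
  rw [trace_conjTranspose_mul_self_re, trace_conjTranspose_mul_self_re]
  calc (∑ p : Fin d × Fin d, ‖(M * W) p.1 p.2‖ ^ 2)
      = ∑ j, ∑ i, ‖(M * W) i j‖ ^ 2 := by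
        rw [Fintype.sum_prod_type]; exact Finset.sum_comm
    _ ≤ ∑ j, ‖M‖ ^ 2 * ∑ i, ‖W i j‖ ^ 2 :=
        Finset.sum_le_sum fun j _ => col_bound M W j
    _ = ‖M‖ ^ 2 * ∑ p : Fin d × Fin d, ‖W p.1 p.2‖ ^ 2 := by
        rw [← Finset.mul_sum]
        congr 1
        rw [Fintype.sum_prod_type]; exact Finset.sum_comm

variable {P : Matrix (Fin d) (Fin d) ℂ}

lemma trace_re_eq_sum (hP : IsProjection P) :
    P.trace.re = ∑ p : Fin d × Fin d, ‖P p.1 p.2‖ ^ 2 := by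
  have h : Pᴴ * P = P := by rw [hP.1, hP.2]
  conv_lhs => rw [← h, trace_conjTranspose_mul_self_re]

lemma trace_re_pos (hP : IsProjection P) (h0 : P ≠ 0) : 0 < P.trace.re := by
  rw [trace_re_eq_sum hP]
  rcases lt_or_ge 0 (∑ p : Fin d × Fin d, ‖P p.1 p.2‖ ^ 2) with h | h
  · exact h
  exfalso
  apply h0
  have hz : ∑ p : Fin d × Fin d, ‖P p.1 p.2‖ ^ 2 = 0 := le_antisymm h (by positivity)
  ext i j
  have := (Finset.sum_eq_zero_iff_of_nonneg (fun p _ => by positivity)).1 hz (i, j)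
    (Finset.mem_univ _)
  simpa using this

lemma trace_eq_re (hP : IsProjection P) : P.trace = ((P.trace.re : ℝ) : ℂ) := by
  have h := Matrix.trace_conjTranspose P
  rw [hP.1] at h
  exact (Complex.conj_eq_iff_re.1 h.symm).symm

lemma condTr_norm_mul_le (hP : IsProjection P) (h0 : P ≠ 0)
    {A : Matrix (Fin d) (Fin d) ℂ} (hA : A.IsHermitian) (M : Matrix (Fin d) (Fin d) ℂ) :
    ‖condTr P (M * A)‖ ≤ ‖M‖ * Real.sqrt ((condTr P (A * A)).re) := by
  set t := P.trace.re with htdef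
  have ht : 0 < t := trace_re_pos hP h0
  have htr : P.trace = (t : ℂ) := trace_eq_re hP
  set s := (P * (A * A) * P).trace.re with hsdef
  have h1 : P * (M * A) * P = (Mᴴ * P)ᴴ * (A * P) := by
    rw [Matrix.conjTranspose_mul, Matrix.conjTranspose_conjTranspose, hP.1]
    simp [Matrix.mul_assoc]
  have hAP : (A * P)ᴴ * (A * P) = P * (A * A) * P := by
    rw [Matrix.conjTranspose_mul, show Aᴴ = A from hA, hP.1]
    simp [Matrix.mul_assoc]
  have hs0 : 0 ≤ s := by
    rw [hsdef, ← hAP, trace_conjTranspose_mul_self_re]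
    positivity
  have h2 : ((Mᴴ * P)ᴴ * (Mᴴ * P)).trace.re ≤ ‖M‖ ^ 2 * t := by
    have hb := trace_mul_re_le (Mᴴ) P
    rw [Matrix.l2_opNorm_conjTranspose] at hb
    have hPP : (Pᴴ * P).trace = P.trace := by
      conv_lhs => rw [hP.1, hP.2]
    rw [hPP] at hb
    exact hb
  have hCS := abs_trace_conjTranspose_mul_le (Mᴴ * P) (A * P)
  rw [hAP] at hCS
  have hnum : ‖(P * (M * A) * P).trace‖ ≤ ‖M‖ * Real.sqrt t * Real.sqrt s := by
    rw [h1]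
    refine hCS.trans ?_
    have hmono : Real.sqrt (((Mᴴ * P)ᴴ * (Mᴴ * P)).trace.re) ≤ ‖M‖ * Real.sqrt t := by
      refine (Real.sqrt_le_sqrt h2).trans ?_
      rw [Real.sqrt_mul (by positivity), Real.sqrt_sq (norm_nonneg M)]
    exact mul_le_mul_of_nonneg_right hmono (Real.sqrt_nonneg _)
  have hval : ‖condTr P (M * A)‖ = ‖(P * (M * A) * P).trace‖ / t := by
    rw [condTr, norm_div, htr, Complex.norm_real, Real.norm_eq_abs, abs_of_pos ht]
  have hre : (condTr P (A * A)).re = s / t := by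
    rw [condTr, htr, Complex.div_ofReal_re]
  rw [hval, hre]
  have halg : ‖M‖ * Real.sqrt t * Real.sqrt s / t = ‖M‖ * Real.sqrt (s / t) := by
    rw [Real.sqrt_div hs0]
    have hsq : Real.sqrt t * Real.sqrt t = t := Real.mul_self_sqrt ht.le
    have hst : Real.sqrt t ≠ 0 := by positivity
    field_simp
    linear_combination ‖M‖ * Real.sqrt s * hsq
  rw [← halg]
  gcongr

lemma norm_one_le : ‖(1 : Matrix (Fin d) (Fin d) ℂ)‖ ≤ 1 := by
  have h := Matrix.l2_opNorm_conjTranspose_mul_self (1 : Matrix (Fin d) (Fin d) ℂ)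
  rw [Matrix.conjTranspose_one, one_mul] at h
  nlinarith [norm_nonneg (1 : Matrix (Fin d) (Fin d) ℂ)]

lemma norm_pow_le (x : Matrix (Fin d) (Fin d) ℂ) : ∀ n : ℕ, ‖x ^ n‖ ≤ ‖x‖ ^ n
  | 0 => by simpa using norm_one_le
  | n + 1 => by
    rw [pow_succ, pow_succ]
    exact (norm_mul_le _ _).trans
      (mul_le_mul_of_nonneg_right (norm_pow_le x n) (norm_nonneg _))

lemma norm_list_prod_le {c : ℝ} (hc : 1 ≤ c) :
    ∀ (L : List (Matrix (Fin d) (Fin d) ℂ)), (∀ a ∈ L, ‖a‖ ≤ c) → ‖L.prod‖ ≤ c ^ L.length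
  | [], _ => by
    simp only [List.prod_nil, List.length_nil, pow_zero]
    exact norm_one_le
  | a :: L, h => by
    rw [List.prod_cons, List.length_cons, pow_succ, mul_comm (c ^ L.length) c]
    refine (norm_mul_le _ _).trans (mul_le_mul (h a (by simp)) ?_ (norm_nonneg _)
      (le_trans zero_le_one hc))
    exact norm_list_prod_le hc L fun b hb => h b (List.mem_cons_of_mem a hb)

lemma exp_factor (x : Matrix (Fin d) (Fin d) ℂ) :
    ∃ B : Matrix (Fin d) (Fin d) ℂ,
      NormedSpace.exp x = 1 + B * x ∧ ‖B‖ ≤ Real.exp ‖x‖ := by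
  classical
  set g : ℕ → Matrix (Fin d) (Fin d) ℂ := fun n => (((n + 1).factorial : ℂ))⁻¹ • x ^ n with hg
  have hmaj : ∀ n, ‖g n‖ ≤ ‖x‖ ^ n / n.factorial := by
    intro n
    rw [hg]
    simp only
    rw [norm_smul]
    have h1 : ‖(((n + 1).factorial : ℂ))⁻¹‖ ≤ ((n.factorial : ℝ))⁻¹ := by
      rw [norm_inv, Complex.norm_natCast]
      refine inv_anti₀ (by positivity) ?_
      exact_mod_cast Nat.factorial_le (Nat.le_succ n)
    calc ‖(((n + 1).factorial : ℂ))⁻¹‖ * ‖x ^ n‖ ≤ ((n.factorial : ℝ))⁻¹ * ‖x‖ ^ n :=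
          mul_le_mul h1 (norm_pow_le x n) (norm_nonneg _) (by positivity)
      _ = ‖x‖ ^ n / n.factorial := by rw [inv_mul_eq_div]
  have hsummaj := Real.summable_pow_div_factorial ‖x‖
  have hsum : Summable g := Summable.of_norm_bounded hsummaj hmaj
  have hsumnorm : Summable fun n => ‖g n‖ :=
    Summable.of_nonneg_of_le (fun n => norm_nonneg _) hmaj hsummaj
  refine ⟨∑' n, g n, ?_, ?_⟩
  · have hexp : NormedSpace.exp x = ∑' n : ℕ, ((n.factorial : ℂ))⁻¹ • x ^ n := by
      rw [NormedSpace.exp_eq_tsum (𝕂 := ℂ)]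
    have hsum0 : Summable fun n : ℕ => ((n.factorial : ℂ))⁻¹ • x ^ n :=
      NormedSpace.expSeries_summable' x
    rw [hexp, hsum0.tsum_eq_zero_add]
    congr 1
    · simp
    have hterm : ∀ n : ℕ, (((n + 1).factorial : ℂ))⁻¹ • x ^ (n + 1) = g n * x := by
      intro n
      rw [hg]
      simp only
      rw [smul_mul_assoc, ← pow_succ]
    calc (∑' n : ℕ, (((n + 1).factorial : ℂ))⁻¹ • x ^ (n + 1)) = ∑' n, g n * x :=
          tsum_congr hterm
      _ = (∑' n, g n) * x := Summable.tsum_mul_right x hsum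
  · refine (norm_tsum_le_tsum_norm hsumnorm).trans ?_
    refine (Summable.tsum_le_tsum hmaj hsumnorm hsummaj).trans ?_
    rw [Real.exp_eq_exp_ℝ, NormedSpace.exp_eq_tsum_div]

lemma prod_sub_one {r : ℕ} (E : Fin r → Matrix (Fin d) (Fin d) ℂ) :
    (List.ofFn E).prod - 1 =
      ∑ i : Fin r, ((List.ofFn E).take i).prod * (E i - 1) := by
  set L := List.ofFn E with hL
  clear_value L
  have hlen : L.length = r := by rw [hL]; exact List.length_ofFn
  have htele := Finset.sum_range_sub (fun m => (L.take m).prod) r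
  have hfr : (L.take r).prod = L.prod := by rw [← hlen, List.take_length]
  simp only [List.take_zero, List.prod_nil, hfr] at htele
  have htele2 : ∑ i : Fin r, ((L.take ((i : ℕ) + 1)).prod - (L.take (i : ℕ)).prod)
      = L.prod - 1 := by
    rw [Fin.sum_univ_eq_sum_range (fun m => (L.take (m + 1)).prod - (L.take m).prod) r]
    exact htele
  rw [← htele2]
  refine Finset.sum_congr rfl fun i _ => ?_
  have hp : (i : ℕ) < L.length := hlen ▸ i.isLt
  rw [List.prod_take_succ L i hp]
  have hgi : L[(i : ℕ)] = E i := by subst hL; simp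
  rw [hgi, mul_sub, mul_one]

lemma condTr_one (hP : IsProjection P) (h0 : P ≠ 0) : condTr P 1 = 1 := by
  have ht : P.trace ≠ 0 := by
    rw [trace_eq_re hP]
    exact_mod_cast (trace_re_pos hP h0).ne'
  rw [condTr, mul_one, hP.2, div_self ht]

lemma condTr_sub (A B : Matrix (Fin d) (Fin d) ℂ) :
    condTr P (A - B) = condTr P A - condTr P B := by
  simp [condTr, Matrix.mul_sub, Matrix.sub_mul, sub_div]

lemma condTr_sum {ι : Type*} (s : Finset ι) (f : ι → Matrix (Fin d) (Fin d) ℂ) :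
    condTr P (∑ i ∈ s, f i) = ∑ i ∈ s, condTr P (f i) := by
  simp [condTr, Finset.mul_sum, Finset.sum_mul, Matrix.trace_sum, Finset.sum_div]

lemma smul_one_isHermitian (c : ℝ) :
    (((c : ℝ) : ℂ) • (1 : Matrix (Fin d) (Fin d) ℂ)).IsHermitian := by
  simp [Matrix.IsHermitian, Matrix.conjTranspose_smul, Complex.conj_ofReal]

lemma fc_sq {X : Matrix (Fin d) (Fin d) ℂ} (hX : X.IsHermitian) (c : ℝ) :
    fc (fun s => (s - c) ^ 2) X
      = (X - (c : ℂ) • 1) * (X - (c : ℂ) • 1) := by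
  have hsa : IsSelfAdjoint X := hX.isSelfAdjoint
  rw [fc, dif_pos hX, ← Matrix.IsHermitian.cfc_eq hX]
  have h1 : cfc (fun s : ℝ => (s - c) ^ 2) X = (cfc (fun s : ℝ => s - c) X) ^ 2 :=
    cfc_pow (fun s : ℝ => s - c) 2 X
  have h2 : cfc (fun s : ℝ => s - c) X = X - (c : ℂ) • 1 := by
    rw [cfc_sub (fun s : ℝ => s) (fun _ : ℝ => c) X, cfc_id' ℝ X, cfc_const c X,
      Algebra.algebraMap_eq_smul_one, Complex.coe_smul]
  rw [h1, h2, sq]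

lemma main_bound {r : ℕ} {P : Matrix (Fin d) (Fin d) ℂ}
    (hproj : IsProjection P) (h0 : P ≠ 0)
    (E A B : Fin r → Matrix (Fin d) (Fin d) ℂ)
    (hAh : ∀ i : Fin r, (A i).IsHermitian)
    (hEB : ∀ i : Fin r, E i = 1 + B i * A i)
    (G : Fin r → ℝ)
    (hG : ∀ i : Fin r, ‖((List.ofFn E).take (i : ℕ)).prod * B i‖ ≤ G i) :
    ‖condTr P (List.ofFn E).prod - 1‖
      ≤ ∑ i : Fin r, G i * Real.sqrt ((condTr P (A i * A i)).re) := by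
  have h1 : condTr P (List.ofFn E).prod - 1
      = ∑ i : Fin r, condTr P ((((List.ofFn E).take (i : ℕ)).prod * B i) * A i) := by
    conv_lhs => rw [← condTr_one hproj h0, ← condTr_sub, prod_sub_one, condTr_sum]
    refine Finset.sum_congr rfl fun i _ => ?_
    congr 1
    rw [hEB i, add_sub_cancel_left, mul_assoc]
  rw [h1]
  refine (norm_sum_le _ _).trans (Finset.sum_le_sum fun i _ => ?_)
  refine (condTr_norm_mul_le hproj h0 (hAh i) _).trans ?_
  exact mul_le_mul_of_nonneg_right (hG i) (Real.sqrt_nonneg _)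

end ExpConc

set_option maxHeartbeats 1000000 in
/-- For a sequence of nonzero projections concentrating at `x`, the
normalized trace of any ordered product of exponentials
`e^{λ_{k_1}(X^N_{k_1} − x_{k_1})} ⋯ e^{λ_{k_r}(X^N_{k_r} − x_{k_r})}` tends to `1`. -/
theorem exp_product_concentration
    (d : ℕ → ℕ) {K : Type*} (X : ∀ N, K → Matrix (Fin (d N)) (Fin (d N)) ℂ)
    (hherm : ∀ N k, (X N k).IsHermitian)
    (hbdd : ∀ k, ∃ C : ℝ, ∀ N, ‖X N k‖ ≤ C)
    (P : ∀ N, Matrix (Fin (d N)) (Fin (d N)) ℂ) (x : K → ℝ)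
    (hP : ConcProj d X P x)
    (r : ℕ) (k : Fin r → K) (hk : Function.Injective k) (l : Fin r → ℂ) :
    Filter.Tendsto
      (fun N => condTr (P N)
        ((List.ofFn fun i => NormedSpace.exp
          (l i • (X N (k i) - (x (k i) : ℂ) • (1 : Matrix (Fin (d N)) (Fin (d N)) ℂ)))).prod))
      Filter.atTop (nhds 1) := by
  classical
  choose C hC using hbdd
  obtain ⟨hPproj, hPconc⟩ := hP
  let A : ∀ N, Fin r → Matrix (Fin (d N)) (Fin (d N)) ℂ :=
    fun N i => X N (k i) - ((x (k i) : ℝ) : ℂ) • 1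
  have hAherm : ∀ N (i : Fin r), (A N i).IsHermitian := fun N i =>
    (hherm N (k i)).sub (ExpConc.smul_one_isHermitian (x (k i)))
  have hAnorm : ∀ N (i : Fin r), ‖A N i‖ ≤ C (k i) + |x (k i)| := by
    intro N i
    refine (norm_sub_le _ _).trans (add_le_add (hC (k i) N) ?_)
    rw [norm_smul, Complex.norm_real, Real.norm_eq_abs]
    calc |x (k i)| * ‖(1 : Matrix (Fin (d N)) (Fin (d N)) ℂ)‖ ≤ |x (k i)| * 1 :=
          mul_le_mul_of_nonneg_left ExpConc.norm_one_le (abs_nonneg _)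
      _ = |x (k i)| := mul_one _
  let t : Fin r → ℝ := fun i => ‖l i‖ * (C (k i) + |x (k i)|)
  have hb0 : ∀ i : Fin r, 0 ≤ C (k i) + |x (k i)| := fun i =>
    (norm_nonneg (A 0 i)).trans (hAnorm 0 i)
  have ht0 : ∀ i : Fin r, 0 ≤ t i := fun i => mul_nonneg (norm_nonneg _) (hb0 i)
  have hxle : ∀ N (i : Fin r), ‖l i • A N i‖ ≤ t i := fun N i => by
    rw [norm_smul]
    exact mul_le_mul_of_nonneg_left (hAnorm N i) (norm_nonneg _)
  set S : ℝ := ∑ i : Fin r, (1 + t i) * Real.exp (t i) with hSdef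
  have hterm0 : ∀ i : Fin r, 0 ≤ (1 + t i) * Real.exp (t i) := fun i =>
    mul_nonneg (by linarith [ht0 i]) (Real.exp_pos _).le
  have hS0 : 0 ≤ S := Finset.sum_nonneg fun i _ => hterm0 i
  set c : ℝ := 1 + S with hcdef
  have hc1 : 1 ≤ c := le_add_of_nonneg_right hS0
  have hci : ∀ i : Fin r, (1 + t i) * Real.exp (t i) ≤ S := fun i =>
    Finset.single_le_sum (fun j _ => hterm0 j) (Finset.mem_univ i)
  have hfac := fun N (i : Fin r) => ExpConc.exp_factor (l i • A N i)
  choose Bf hBf1 hBf2 using hfac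
  have hBfle : ∀ N (i : Fin r), ‖Bf N i‖ ≤ Real.exp (t i) := fun N i =>
    (hBf2 N i).trans (Real.exp_le_exp.2 (hxle N i))
  have hEB : ∀ N (i : Fin r),
      NormedSpace.exp (l i • A N i) = 1 + (l i • Bf N i) * A N i := by
    intro N i
    rw [hBf1 N i, mul_smul_comm, ← smul_mul_assoc]
  have hEnorm : ∀ N (i : Fin r), ‖NormedSpace.exp (l i • A N i)‖ ≤ c := by
    intro N i
    rw [hBf1 N i]
    refine (norm_add_le _ _).trans ?_
    have h2 : ‖Bf N i * (l i • A N i)‖ ≤ Real.exp (t i) * t i :=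
      (norm_mul_le _ _).trans
        (mul_le_mul (hBfle N i) (hxle N i) (norm_nonneg _) (Real.exp_pos _).le)
    have h3 : Real.exp (t i) * t i ≤ (1 + t i) * Real.exp (t i) := by
      nlinarith [Real.exp_pos (t i), ht0 i]
    have h4 := hci i
    have h5 := ExpConc.norm_one_le (d := d N)
    rw [hcdef]
    linarith
  have hBnorm : ∀ N (i : Fin r), ‖l i • Bf N i‖ ≤ ‖l i‖ * c := by
    intro N i
    rw [norm_smul]
    refine mul_le_mul_of_nonneg_left ?_ (norm_nonneg _)
    have h3 : Real.exp (t i) ≤ (1 + t i) * Real.exp (t i) := by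
      nlinarith [Real.exp_pos (t i), ht0 i]
    have h4 := hci i
    have h5 := hBfle N i
    rw [hcdef]
    linarith
  set G : Fin r → ℝ := fun i => c ^ r * (‖l i‖ * c) with hGdef
  have hc0 : (0:ℝ) ≤ c := by linarith
  have hbound : ∀ N,
      ‖condTr (P N) ((List.ofFn fun i => NormedSpace.exp
          (l i • (X N (k i) - (x (k i) : ℂ) • (1 : Matrix (Fin (d N)) (Fin (d N)) ℂ)))).prod)
        - 1‖
      ≤ ∑ i : Fin r, G i * Real.sqrt ((condTr (P N) (A N i * A N i)).re) := by
    intro N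
    obtain ⟨hproj, hne⟩ := hPproj N
    refine ExpConc.main_bound hproj hne _ (A N) (fun i => l i • Bf N i)
      (hAherm N) (hEB N) G ?_
    intro i
    refine (norm_mul_le _ _).trans ?_
    refine mul_le_mul ?_ (hBnorm N i) (norm_nonneg _) (pow_nonneg hc0 r)
    refine (ExpConc.norm_list_prod_le hc1 _ ?_).trans ?_
    · intro a ha
      have ha2 := List.take_subset _ _ ha
      rw [List.mem_ofFn] at ha2
      obtain ⟨j, rfl⟩ := ha2
      exact hEnorm N j
    · refine pow_le_pow_right₀ hc1 ?_
      refine (List.length_take_le _ _).trans ?_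
      exact i.isLt.le
  have hconv : ∀ i : Fin r,
      Filter.Tendsto (fun N => condTr (P N) (A N i * A N i)) Filter.atTop (nhds 0) := by
    intro i
    have hFcont : Continuous fun s : ℝ => (s - x (k i)) ^ 2 := by fun_prop
    have h := hPconc (k i) (fun s => (s - x (k i)) ^ 2) hFcont
    have heq : ∀ N, fc (fun s => (s - x (k i)) ^ 2) (X N (k i)) = A N i * A N i :=
      fun N => ExpConc.fc_sq (hherm N (k i)) (x (k i))
    simp only [heq] at h
    simpa using h
  have hzero : Filter.Tendsto
      (fun N => ∑ i : Fin r, G i * Real.sqrt ((condTr (P N) (A N i * A N i)).re))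
      Filter.atTop (nhds 0) := by
    have h0 : ∀ i : Fin r, Filter.Tendsto
        (fun N => G i * Real.sqrt ((condTr (P N) (A N i * A N i)).re))
        Filter.atTop (nhds 0) := by
      intro i
      have h1 : Filter.Tendsto (fun N => (condTr (P N) (A N i * A N i)).re)
          Filter.atTop (nhds 0) := by
        have := (Complex.continuous_re.tendsto (0 : ℂ)).comp (hconv i)
        exact this
      have h2 : Filter.Tendsto (fun N => Real.sqrt ((condTr (P N) (A N i * A N i)).re))
          Filter.atTop (nhds 0) := by
        have := (Real.continuous_sqrt.tendsto 0).comp h1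
        rw [Real.sqrt_zero] at this
        exact this
      simpa using h2.const_mul (G i)
    have := tendsto_finset_sum (Finset.univ : Finset (Fin r)) (fun i _ => h0 i)
    simpa using this
  rw [tendsto_iff_norm_sub_tendsto_zero]
  exact squeeze_zero (fun N => norm_nonneg _) hbound hzero
end

section
/- For each N ∈ ℕ and real numbers t ≥ s ≥ 0, let τ^N_{t,s} be the *-automorphism of d_N × d_N complex matrices given by conjugation with a unitary, and assume τ^N_{t,s} = τ^N_{t,u} ∘ τ^N_{u,s} for all t ≥ u ≥ s ≥ 0. Let Ω = {x ∈ ℝ^K : H^mc(x) ≥ 0} and let φ_{t,s} : Ω → Ω (t ≥ s ≥ 0) satisfy the semigroup property φ_{t,u} ∘ φ_{u,s} = φ_{t,s} for t ≥ u ≥ s ≥ 0. Assume the autonomy condition: for every x ∈ Ω there is a microcanonical macrostate (P^N(x)) at x such that for every finite index sequence (k_1, …, k_m) and all t ≥ s ≥ 0, lim_{N→∞} tr^N( τ^N_{t,s}(X^N_{k_1} ⋯ X^N_{k_m}) | P^N(x) ) = (φ_{t,s}x)_{k_1} ⋯ (φ_{t,s}x)_{k_m}. Then for every x ∈ Ω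 the function t ↦ H^mc(φ_{t,0} x) is nondecreasing on t ≥ 0. -/
open scoped Matrix Matrix.Norms.L2Operator ComplexOrder

/-! ### Auxiliary lemmas -/

noncomputable instance {d : ℕ} : CStarAlgebra (Matrix (Fin d) (Fin d) ℂ) := {}

namespace HThmAux

variable {d : ℕ}

lemma trace_conj_bound (R B : Matrix (Fin d) (Fin d) ℂ) :
    ‖(Rᴴ * B * R).trace‖ ≤ ‖B‖ * (Rᴴ * R).trace.re := by
  classical
  set r : Fin d → EuclideanSpace ℂ (Fin d) := fun i => WithLp.toLp 2 (fun j => R j i) with hr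
  have key : ∀ i, (Rᴴ * B * R) i i
      = inner ℂ (r i) ((EuclideanSpace.equiv (Fin d) ℂ).symm (B.mulVec (r i))) := by
    intro i
    simp only [Matrix.mul_apply, Matrix.conjTranspose_apply, PiLp.inner_apply,
      RCLike.inner_apply, EuclideanSpace.equiv, Matrix.mulVec, dotProduct]
    simp only [hr, PiLp.continuousLinearEquiv_symm_apply, WithLp.equiv_symm_apply, PiLp.toLp_apply,
      Matrix.mulVec, dotProduct, Finset.sum_mul, Finset.mul_sum]
    rw [Finset.sum_comm]
    refine Finset.sum_congr rfl fun j _ => Finset.sum_congr rfl fun l _ => ?_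
    rw [RCLike.star_def]; ring
  have normsq : ∀ i, ‖r i‖ ^ 2 = ((Rᴴ * R) i i).re := by
    intro i
    rw [← inner_self_eq_norm_sq (𝕜 := ℂ)]
    simp only [PiLp.inner_apply, RCLike.inner_apply, Matrix.mul_apply,
      Matrix.conjTranspose_apply, Complex.re_sum, RCLike.star_def, hr]
    norm_num
  calc ‖(Rᴴ * B * R).trace‖ = ‖∑ i, (Rᴴ * B * R) i i‖ := rfl
    _ ≤ ∑ i, ‖(Rᴴ * B * R) i i‖ := norm_sum_le _ _
    _ ≤ ∑ i, ‖B‖ * ‖r i‖ ^ 2 := by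
        refine Finset.sum_le_sum fun i _ => ?_
        rw [key i]
        calc ‖(inner ℂ (r i) ((EuclideanSpace.equiv (Fin d) ℂ).symm (B.mulVec (r i))) : ℂ)‖
            ≤ ‖r i‖ * ‖(EuclideanSpace.equiv (Fin d) ℂ).symm (B.mulVec (r i))‖ :=
              norm_inner_le_norm _ _
          _ ≤ ‖r i‖ * (‖B‖ * ‖r i‖) := by
              gcongr
              exact Matrix.l2_opNorm_mulVec B (r i)
          _ = ‖B‖ * ‖r i‖ ^ 2 := by ring
    _ = ‖B‖ * (Rᴴ * R).trace.re := by
        rw [← Finset.mul_sum]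
        congr 1
        simp only [normsq, Matrix.trace, Matrix.diag, Complex.re_sum]

lemma proj_trace_eq (P : Matrix (Fin d) (Fin d) ℂ) (hP : IsProjection P) :
    P.trace = ((∑ i, ∑ j, Complex.normSq (P j i) : ℝ) : ℂ) := by
  conv_lhs => rw [← hP.2]
  push_cast
  simp only [Matrix.trace, Matrix.diag, Matrix.mul_apply]
  refine Finset.sum_congr rfl fun i _ => Finset.sum_congr rfl fun j _ => ?_
  rw [← hP.1.apply i j, RCLike.star_def, ← Complex.normSq_eq_conj_mul_self]

lemma proj_trace_re_pos (P : Matrix (Fin d) (Fin d) ℂ) (hP : IsProjection P) (h0 : P ≠ 0) :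
    0 < P.trace.re := by
  rw [proj_trace_eq P hP, Complex.ofReal_re]
  rcases (Finset.sum_nonneg fun i _ => Finset.sum_nonneg fun j _ =>
      Complex.normSq_nonneg (P j i)).lt_or_eq with h | h
  · exact h
  · exfalso
    apply h0
    ext i j
    have h' := (Finset.sum_eq_zero_iff_of_nonneg fun a _ => Finset.sum_nonneg fun b _ =>
      Complex.normSq_nonneg (P b a)).mp h.symm j (Finset.mem_univ j)
    have := (Finset.sum_eq_zero_iff_of_nonneg fun b _ =>
      Complex.normSq_nonneg (P b j)).mp h' i (Finset.mem_univ i)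
    simpa [Complex.normSq_eq_zero] using this

lemma condTr_conj_norm_le (P V B : Matrix (Fin d) (Fin d) ℂ) (hP : IsProjection P)
    (h0 : P ≠ 0) (hV : V ∈ Matrix.unitaryGroup (Fin d) ℂ) :
    ‖condTr P (V * B * Vᴴ)‖ ≤ ‖B‖ := by
  have hVV : V * Vᴴ = 1 := by
    rw [← Matrix.star_eq_conjTranspose]
    exact Matrix.mem_unitaryGroup_iff.mp hV
  have hnum : P * (V * B * Vᴴ) * P = (Vᴴ * P)ᴴ * B * (Vᴴ * P) := by
    simp only [Matrix.conjTranspose_mul, Matrix.conjTranspose_conjTranspose]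
    rw [hP.1.eq]
    noncomm_ring
  have hRR : (Vᴴ * P)ᴴ * (Vᴴ * P) = P := by
    simp only [Matrix.conjTranspose_mul, Matrix.conjTranspose_conjTranspose]
    rw [hP.1.eq]
    calc P * V * (Vᴴ * P) = P * (V * Vᴴ) * P := by noncomm_ring
      _ = P * P := by rw [hVV, mul_one]
      _ = P := hP.2
  have htr : 0 < P.trace.re := proj_trace_re_pos P hP h0
  have htr' : P.trace = ((P.trace.re : ℝ) : ℂ) := by
    rw [proj_trace_eq P hP]; simp
  have hnre : ‖((P.trace.re : ℝ) : ℂ)‖ = P.trace.re := by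
    rw [Complex.norm_real, Real.norm_eq_abs, abs_of_pos htr]
  rw [condTr, hnum, htr', norm_div, hnre, div_le_iff₀ htr]
  calc ‖((Vᴴ * P)ᴴ * B * (Vᴴ * P)).trace‖ ≤ ‖B‖ * ((Vᴴ * P)ᴴ * (Vᴴ * P)).trace.re :=
        trace_conj_bound _ _
    _ = ‖B‖ * P.trace.re := by rw [hRR]

lemma condTr_add (P A B : Matrix (Fin d) (Fin d) ℂ) :
    condTr P (A + B) = condTr P A + condTr P B := by
  simp only [condTr, Matrix.mul_add, Matrix.add_mul, Matrix.trace_add, add_div]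

lemma condTr_sub (P A B : Matrix (Fin d) (Fin d) ℂ) :
    condTr P (A - B) = condTr P A - condTr P B := by
  simp only [condTr, Matrix.mul_sub, Matrix.sub_mul, Matrix.trace_sub, sub_div]

lemma condTr_smul (P A : Matrix (Fin d) (Fin d) ℂ) (r : ℝ) :
    condTr P (r • A) = r • condTr P A := by
  simp only [condTr, Matrix.mul_smul, Matrix.smul_mul, Matrix.trace_smul, smul_div_assoc]

lemma condTr_sum {ι : Type*} (P : Matrix (Fin d) (Fin d) ℂ) (s : Finset ι)
    (f : ι → Matrix (Fin d) (Fin d) ℂ) :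
    condTr P (∑ i ∈ s, f i) = ∑ i ∈ s, condTr P (f i) := by
  simp only [condTr, Finset.mul_sum, Finset.sum_mul, Matrix.trace_sum, Finset.sum_div]

lemma spec_bound (A : Matrix (Fin d) (Fin d) ℂ) {C : ℝ} (hA : ‖A‖ ≤ C) :
    ∀ x ∈ spectrum ℝ A, |x| ≤ C := by
  intro x hx
  rcases Nat.eq_zero_or_pos d with h | h
  · subst h
    have : Subsingleton (Matrix (Fin 0) (Fin 0) ℂ) := ⟨fun a b => by ext i; exact i.elim0⟩
    exact absurd hx (by simp [spectrum.mem_iff, isUnit_of_subsingleton])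
  · have : NeZero d := ⟨h.ne'⟩
    have : NormOneClass (Matrix (Fin d) (Fin d) ℂ) := ⟨CStarRing.norm_one⟩
    calc |x| = ‖x‖ := rfl
      _ ≤ ‖A‖ := spectrum.norm_le_norm_of_mem hx
      _ ≤ C := hA

lemma fc_poly (A : Matrix (Fin d) (Fin d) ℂ) (hA : A.IsHermitian) (p : Polynomial ℝ) :
    fc (fun x => Polynomial.eval x p) A
      = ∑ i ∈ Finset.range (p.natDegree + 1), p.coeff i • A ^ i := by
  have hsa : IsSelfAdjoint A := hA.isSelfAdjoint
  rw [fc, dif_pos hA, ← hA.cfc_eq]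
  have : (fun x => Polynomial.eval x p)
      = ∑ i ∈ Finset.range (p.natDegree + 1), (fun x => p.coeff i * x ^ i) := by
    funext x
    rw [Polynomial.eval_eq_sum_range]
    simp
  rw [this, cfc_sum (R := ℝ) _ A _ (fun i _ => (by fun_prop : Continuous fun x : ℝ => p.coeff i * x ^ i).continuousOn)]
  refine Finset.sum_congr rfl fun i _ => ?_
  rw [cfc_const_mul (R := ℝ) _ _ A ((continuous_pow i).continuousOn), cfc_pow_id (R := ℝ) A i]

open Filter in
lemma conc_of_conj (d : ℕ → ℕ) (X : ∀ N, Matrix (Fin (d N)) (Fin (d N)) ℂ)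
    (hherm : ∀ N, (X N).IsHermitian) {C : ℝ} (hC : ∀ N, ‖X N‖ ≤ C)
    (P : ∀ N, Matrix (Fin (d N)) (Fin (d N)) ℂ)
    (hP : ∀ N, IsProjection (P N) ∧ P N ≠ 0)
    (V : ∀ N, Matrix (Fin (d N)) (Fin (d N)) ℂ)
    (hV : ∀ N, V N ∈ Matrix.unitaryGroup (Fin (d N)) ℂ) (z : ℝ)
    (hmono : ∀ m : ℕ, Tendsto (fun N => condTr (P N) (V N * (X N) ^ m * (V N)ᴴ))
      atTop (nhds ((z ^ m : ℝ) : ℂ)))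
    (F : ℝ → ℝ) (hF : Continuous F) :
    Tendsto (fun N => condTr (P N) (V N * fc F (X N) * (V N)ᴴ)) atTop (nhds ((F z : ℝ) : ℂ)) := by
  have bnd : ∀ N (B : Matrix (Fin (d N)) (Fin (d N)) ℂ),
      ‖condTr (P N) (V N * B * (V N)ᴴ)‖ ≤ ‖B‖ := fun N B =>
    condTr_conj_norm_le (P N) (V N) B (hP N).1 (hP N).2 (hV N)
  -- |z| ≤ C
  have hzC : |z| ≤ C := by
    have h1 := (hmono 1).norm
    have : ∀ N, ‖condTr (P N) (V N * (X N) ^ 1 * (V N)ᴴ)‖ ≤ C := fun N =>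
      (bnd N ((X N) ^ 1)).trans (by rw [pow_one]; exact hC N)
    have := le_of_tendsto h1 (Filter.Eventually.of_forall this)
    simpa using this
  have hzI : z ∈ Set.Icc (-C) C := by
    rw [Set.mem_Icc, ← abs_le]; exact hzC
  -- polynomial convergence
  have hpoly : ∀ p : Polynomial ℝ,
      Tendsto (fun N => condTr (P N) (V N * fc (fun x => Polynomial.eval x p) (X N) * (V N)ᴴ))
        atTop (nhds ((Polynomial.eval z p : ℝ) : ℂ)) := by
    intro p
    have heq : ∀ N, condTr (P N) (V N * fc (fun x => Polynomial.eval x p) (X N) * (V N)ᴴ)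
        = ∑ i ∈ Finset.range (p.natDegree + 1),
            p.coeff i • condTr (P N) (V N * (X N) ^ i * (V N)ᴴ) := by
      intro N
      rw [fc_poly (X N) (hherm N) p, Finset.mul_sum, Finset.sum_mul, condTr_sum]
      refine Finset.sum_congr rfl fun i _ => ?_
      rw [Matrix.mul_smul, Matrix.smul_mul, condTr_smul]
    have hlim : ((Polynomial.eval z p : ℝ) : ℂ)
        = ∑ i ∈ Finset.range (p.natDegree + 1), p.coeff i • ((z ^ i : ℝ) : ℂ) := by
      rw [Polynomial.eval_eq_sum_range]
      push_cast
      simp [Complex.real_smul]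
    rw [hlim]
    refine Tendsto.congr (fun N => (heq N).symm) ?_
    exact tendsto_finset_sum _ fun i _ => (hmono i).const_smul _
  -- main ε-argument
  rw [Metric.tendsto_atTop]
  intro ε hε
  obtain ⟨p, hp⟩ := exists_polynomial_near_of_continuousOn (-C) C F hF.continuousOn (ε / 4)
    (by positivity)
  have hdiff : ∀ N, ‖fc F (X N) - fc (fun x => Polynomial.eval x p) (X N)‖ ≤ ε / 4 := by
    intro N
    have hXsa : IsSelfAdjoint (X N) := (hherm N).isSelfAdjoint
    rw [fc, dif_pos (hherm N), fc, dif_pos (hherm N), ← (hherm N).cfc_eq, ← (hherm N).cfc_eq,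
      ← cfc_sub F (fun x => Polynomial.eval x p) (X N) hF.continuousOn
        (by fun_prop : Continuous fun x : ℝ => Polynomial.eval x p).continuousOn]
    refine norm_cfc_le (by positivity) fun x hx => ?_
    have hxI : x ∈ Set.Icc (-C) C := by
      rw [Set.mem_Icc, ← abs_le]
      exact spec_bound (X N) (hC N) x hx
    have := (hp x hxI).le
    rw [Real.norm_eq_abs, abs_sub_comm] at *
    linarith [abs_sub_comm (Polynomial.eval x p) (F x) ▸ this]
  obtain ⟨N₀, hN₀⟩ := Metric.tendsto_atTop.mp (hpoly p) (ε / 4) (by positivity)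
  refine ⟨N₀, fun n hn => ?_⟩
  have h1 : condTr (P n) (V n * fc F (X n) * (V n)ᴴ)
      - condTr (P n) (V n * fc (fun x => Polynomial.eval x p) (X n) * (V n)ᴴ)
      = condTr (P n) (V n * (fc F (X n) - fc (fun x => Polynomial.eval x p) (X n)) * (V n)ᴴ) := by
    rw [Matrix.mul_sub, Matrix.sub_mul, condTr_sub]
  have e1 : ‖condTr (P n) (V n * fc F (X n) * (V n)ᴴ)
      - condTr (P n) (V n * fc (fun x => Polynomial.eval x p) (X n) * (V n)ᴴ)‖ ≤ ε / 4 := by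
    rw [h1]
    exact (bnd n _).trans (hdiff n)
  have e2 : ‖condTr (P n) (V n * fc (fun x => Polynomial.eval x p) (X n) * (V n)ᴴ)
      - ((Polynomial.eval z p : ℝ) : ℂ)‖ < ε / 4 := by
    have := hN₀ n hn
    rwa [dist_eq_norm] at this
  have e3 : ‖(((Polynomial.eval z p : ℝ) : ℂ)) - ((F z : ℝ) : ℂ)‖ ≤ ε / 4 := by
    rw [← Complex.ofReal_sub, Complex.norm_real, Real.norm_eq_abs]
    exact (hp z hzI).le
  rw [dist_eq_norm]
  calc ‖condTr (P n) (V n * fc F (X n) * (V n)ᴴ) - ((F z : ℝ) : ℂ)‖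
      = ‖(condTr (P n) (V n * fc F (X n) * (V n)ᴴ)
          - condTr (P n) (V n * fc (fun x => Polynomial.eval x p) (X n) * (V n)ᴴ))
        + (condTr (P n) (V n * fc (fun x => Polynomial.eval x p) (X n) * (V n)ᴴ)
          - ((Polynomial.eval z p : ℝ) : ℂ))
        + (((Polynomial.eval z p : ℝ) : ℂ) - ((F z : ℝ) : ℂ))‖ := by ring_nf
    _ ≤ _ + _ + _ := norm_add₃_le
    _ < ε := by linarith

open Filter in
lemma evolve_le (d : ℕ → ℕ) {K : Type*} (X : ∀ N, K → Matrix (Fin (d N)) (Fin (d N)) ℂ)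
    (hherm : ∀ N k, (X N k).IsHermitian) (hbdd : ∀ k, ∃ C : ℝ, ∀ N, ‖X N k‖ ≤ C)
    (V : ∀ N, Matrix (Fin (d N)) (Fin (d N)) ℂ)
    (hV : ∀ N, V N ∈ Matrix.unitaryGroup (Fin (d N)) ℂ)
    (y z : K → ℝ) (P : ∀ N, Matrix (Fin (d N)) (Fin (d N)) ℂ)
    (hmac : IsMicroMacrostate d X P y)
    (hlim : ∀ (m : ℕ) (k : Fin m → K),
      Tendsto (fun N => condTr (P N) (V N * (List.ofFn fun i => X N (k i)).prod * (V N)ᴴ))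
        atTop (nhds ((∏ i, z (k i) : ℝ) : ℂ))) :
    Hmc d X y ≤ Hmc d X z := by
  classical
  set Q : ∀ N, Matrix (Fin (d N)) (Fin (d N)) ℂ := fun N => (V N)ᴴ * P N * V N with hQ
  have hVV : ∀ N, V N * (V N)ᴴ = 1 := fun N => by
    rw [← Matrix.star_eq_conjTranspose]; exact Matrix.mem_unitaryGroup_iff.mp (hV N)
  have hVV' : ∀ N, (V N)ᴴ * V N = 1 := fun N => by
    rw [← Matrix.star_eq_conjTranspose]; exact Matrix.mem_unitaryGroup_iff'.mp (hV N)
  have hPproj : ∀ N, IsProjection (P N) := fun N => ((hmac.1).1 N).1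
  have hPne : ∀ N, P N ≠ 0 := fun N => ((hmac.1).1 N).2
  have hQproj : ∀ N, IsProjection (Q N) := by
    intro N
    constructor
    · show (Q N)ᴴ = Q N
      simp only [hQ, Matrix.conjTranspose_mul, Matrix.conjTranspose_conjTranspose,
        (hPproj N).1.eq]
      noncomm_ring
    · show Q N * Q N = Q N
      calc (V N)ᴴ * P N * V N * ((V N)ᴴ * P N * V N)
          = (V N)ᴴ * P N * (V N * (V N)ᴴ) * P N * V N := by noncomm_ring
        _ = (V N)ᴴ * (P N * P N) * V N := by rw [hVV N, mul_one]; noncomm_ring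
        _ = (V N)ᴴ * P N * V N := by rw [(hPproj N).2]
  have hQtr : ∀ N, (Q N).trace = (P N).trace := by
    intro N
    calc ((V N)ᴴ * P N * V N).trace = (V N * (V N)ᴴ * P N).trace := Matrix.trace_mul_cycle _ _ _
      _ = (P N).trace := by rw [hVV N, one_mul]
  have hQne : ∀ N, Q N ≠ 0 := by
    intro N h
    apply hPne N
    have : V N * Q N * (V N)ᴴ = P N := by
      calc V N * ((V N)ᴴ * P N * V N) * (V N)ᴴ
          = (V N * (V N)ᴴ) * P N * (V N * (V N)ᴴ) := by noncomm_ring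
        _ = P N := by rw [hVV N, one_mul, mul_one]
    rw [← this, h, Matrix.mul_zero, Matrix.zero_mul]
  have hcond : ∀ N (A : Matrix (Fin (d N)) (Fin (d N)) ℂ),
      condTr (Q N) A = condTr (P N) (V N * A * (V N)ᴴ) := by
    intro N A
    rw [condTr, condTr, hQtr N]
    congr 1
    have : Q N * A * Q N = (V N)ᴴ * (P N * (V N * A * (V N)ᴴ) * P N) * V N := by
      simp only [hQ]; noncomm_ring
    rw [this]
    calc ((V N)ᴴ * (P N * (V N * A * (V N)ᴴ) * P N) * V N).trace
        = (V N * (V N)ᴴ * (P N * (V N * A * (V N)ᴴ) * P N)).trace := Matrix.trace_mul_cycle _ _ _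
      _ = _ := by rw [hVV N, one_mul]
  have hconc : ConcProj d X Q z := by
    refine ⟨fun N => ⟨hQproj N, hQne N⟩, fun k F hF => ?_⟩
    obtain ⟨C, hC⟩ := hbdd k
    have hmono : ∀ m : ℕ, Tendsto (fun N => condTr (P N) (V N * (X N k) ^ m * (V N)ᴴ))
        atTop (nhds ((z k ^ m : ℝ) : ℂ)) := by
      intro m
      have := hlim m (fun _ => k)
      simpa only [List.ofFn_const, List.prod_replicate, Finset.prod_const, Finset.card_univ,
        Fintype.card_fin] using this
    have := conc_of_conj d (fun N => X N k) (fun N => hherm N k) hC P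
      (fun N => ⟨hPproj N, hPne N⟩) V hV (z k) hmono F hF
    exact Tendsto.congr (fun N => (hcond N (fc F (X N k))).symm) this
  have hmem : Hmc d X y ∈ { h | ∃ P' : ∀ N, Matrix (Fin (d N)) (Fin (d N)) ℂ,
      ConcProj d X P' z ∧ h = Filter.limsup
        (fun N : ℕ => (((N : ℝ)⁻¹ * Real.log ((P' N).trace.re) : ℝ) : EReal)) Filter.atTop } := by
    refine ⟨Q, hconc, ?_⟩
    rw [← hmac.2]
    congr 1
    funext N
    rw [hQtr N]
  exact le_sSup hmem

end HThmAux


/-- H-theorem in the microcanonical set-up: if the unitary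
microscopic dynamics induces (via autonomy on microcanonical macrostates) a
macroscopic dynamics `φ` on `Ω = {x : H^mc(x) ≥ 0}` satisfying the semigroup
property, then `t ↦ H^mc(φ_{t,0} x)` is nondecreasing on `t ≥ 0`. -/
theorem H_theorem_microcanonical
    (d : ℕ → ℕ) {K : Type*} (X : ∀ N, K → Matrix (Fin (d N)) (Fin (d N)) ℂ)
    (hherm : ∀ N k, (X N k).IsHermitian)
    (hbdd : ∀ k, ∃ C : ℝ, ∀ N, ‖X N k‖ ≤ C)
    -- the microscopic dynamics: conjugation with unitaries `U N t s`
    (U : ∀ N, ℝ → ℝ → Matrix (Fin (d N)) (Fin (d N)) ℂ)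
    (hU : ∀ N, ∀ t s : ℝ, U N t s ∈ Matrix.unitaryGroup (Fin (d N)) ℂ)
    (hUcomp : ∀ N, ∀ s u t : ℝ, 0 ≤ s → s ≤ u → u ≤ t →
      ∀ A : Matrix (Fin (d N)) (Fin (d N)) ℂ,
        U N t s * A * (U N t s)ᴴ = U N t u * (U N u s * A * (U N u s)ᴴ) * (U N t u)ᴴ)
    -- the macroscopic dynamics `φ`, mapping `Ω` to `Ω`
    (φ : ℝ → ℝ → (K → ℝ) → (K → ℝ))
    (hφΩ : ∀ t s : ℝ, 0 ≤ s → s ≤ t → ∀ x : K → ℝ, 0 ≤ Hmc d X x → 0 ≤ Hmc d X (φ t s x))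
    -- semigroup property
    (hsemi : ∀ s u t : ℝ, 0 ≤ s → s ≤ u → u ≤ t → ∀ x : K → ℝ, 0 ≤ Hmc d X x →
      φ t u (φ u s x) = φ t s x)
    -- autonomy condition
    (hauto : ∀ x : K → ℝ, 0 ≤ Hmc d X x →
      ∃ P : ∀ N, Matrix (Fin (d N)) (Fin (d N)) ℂ, IsMicroMacrostate d X P x ∧
        ∀ t s : ℝ, 0 ≤ s → s ≤ t → ∀ (m : ℕ) (k : Fin m → K),
          Filter.Tendsto
            (fun N => condTr (P N)
              (U N t s * (List.ofFn fun i => X N (k i)).prod * (U N t s)ᴴ))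
            Filter.atTop (nhds ((∏ i, φ t s x (k i) : ℝ) : ℂ))) :
    ∀ x : K → ℝ, 0 ≤ Hmc d X x → ∀ t₁ t₂ : ℝ, 0 ≤ t₁ → t₁ ≤ t₂ →
      Hmc d X (φ t₁ 0 x) ≤ Hmc d X (φ t₂ 0 x) := by
  intro x hx t₁ t₂ ht₁ h12
  have hy : 0 ≤ Hmc d X (φ t₁ 0 x) := hφΩ t₁ 0 le_rfl ht₁ x hx
  obtain ⟨P, hmac, haut⟩ := hauto (φ t₁ 0 x) hy
  have key := HThmAux.evolve_le d X hherm hbdd (fun N => U N t₂ t₁) (fun N => hU N t₂ t₁)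
    (φ t₁ 0 x) (φ t₂ t₁ (φ t₁ 0 x)) P hmac (fun m k => haut t₂ t₁ ht₁ h12 m k)
  rwa [hsemi 0 t₁ t₂ le_rfl ht₁ h12 x hx] at key
end

section
/- For each N ∈ ℕ and real t ≥ s ≥ 0 let τ^N_{t,s} be a linear map on d_N × d_N complex matrices such that: τ^N_{t,s} = τ^N_{t,u} ∘ τ^N_{u,s} for t ≥ u ≥ s ≥ 0; for every state ω the functional ω ∘ τ^N_{t,s} is again a state; a fixed sequence of faithful states (ρ^N) satisfies ρ^N ∘ τ^N_{t,s} = ρ^N; and the relative entropy contracts, 𝓗(ω ∘ τ^N_{t,s} | ρ ∘ τ^N_{t,s}) ≤ 𝓗(ω | ρ) for all states ω, ρ (as holds for completely positive maps). Let Ω_1(ρ) = {x : H^can_1(x | ρ) < ∞} and let φ_{t,s} : Ω_1(ρ) → Ω_1(ρ) satisfy φ_{t,u} ∘ φ_{u,s} = φ_{t,s} for t ≥ u ≥ s ≥ 0. Assume: for every x ∈ Ω_1(ρ) there is a sequence of states (ω^N) with ω^N →1 x and liminf_N (1/N)𝓗(ω^N | ρ^N) = H^can_1(x | ρ), such that for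 all t ≥ s ≥ 0 and k ∈ K, lim_{N→∞} (ω^N ∘ τ^N_{t,s})(X^N_k) = (φ_{t,s} x)_k. Then for every x ∈ Ω_1(ρ) the function t ↦ H^can_1(φ_{t,0} x | ρ) is nonincreasing on t ≥ 0. -/
open scoped Matrix Matrix.Norms.L2Operator ComplexOrder

/-- H-theorem in the canonical set-up: for a family of
state-preserving, relative-entropy contracting maps `τ^N_{t,s}` leaving a faithful
reference state `ρ^N` invariant, if the macroscopic dynamics `φ` on
`Ω₁(ρ) = {x : H^can_1(x|ρ) < ∞}` is autonomous in the mean and satisfies the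
semigroup property, then `t ↦ H^can_1(φ_{t,0}x | ρ)` is nonincreasing on `t ≥ 0`. -/
theorem H_theorem_canonical
    (d : ℕ → ℕ) {K : Type*} (X : ∀ N, K → Matrix (Fin (d N)) (Fin (d N)) ℂ)
    (hherm : ∀ N k, (X N k).IsHermitian)
    (hbdd : ∀ k, ∃ C : ℝ, ∀ N, ‖X N k‖ ≤ C)
    (τ : ∀ N, ℝ → ℝ →
      Matrix (Fin (d N)) (Fin (d N)) ℂ →ₗ[ℂ] Matrix (Fin (d N)) (Fin (d N)) ℂ)
    -- composition law τ_{t,s} = τ_{t,u} ∘ τ_{u,s}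
    (hcomp : ∀ N, ∀ s u t : ℝ, 0 ≤ s → s ≤ u → u ≤ t →
      ∀ A, τ N t s A = τ N t u (τ N u s A))
    -- ω ∘ τ_{t,s} is again a state
    (hstate : ∀ N, ∀ t s : ℝ, 0 ≤ s → s ≤ t → ∀ σ, IsDensity σ →
      ∃ σ', IsDensity σ' ∧ ∀ A, expVal σ' A = expVal σ (τ N t s A))
    -- the faithful invariant reference states ρ^N
    (ρ : ∀ N, Matrix (Fin (d N)) (Fin (d N)) ℂ)
    (hρ : ∀ N, IsDensity (ρ N) ∧ (ρ N).PosDef)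
    (hρinv : ∀ N, ∀ t s : ℝ, 0 ≤ s → s ≤ t →
      ∀ A, expVal (ρ N) (τ N t s A) = expVal (ρ N) A)
    -- contraction of the relative entropy
    (hcontract : ∀ N, ∀ t s : ℝ, 0 ≤ s → s ≤ t →
      ∀ σ σ₀ σ' σ₀', IsDensity σ → IsDensity σ₀ → IsDensity σ' → IsDensity σ₀' →
        (∀ A, expVal σ' A = expVal σ (τ N t s A)) →
        (∀ A, expVal σ₀' A = expVal σ₀ (τ N t s A)) →
        relEntropy σ' σ₀' ≤ relEntropy σ σ₀)
    -- macroscopic dynamics on Ω₁(ρ)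
    (φ : ℝ → ℝ → (K → ℝ) → (K → ℝ))
    (hφΩ : ∀ t s : ℝ, 0 ≤ s → s ≤ t → ∀ x : K → ℝ,
      Hcan1Rel d X ρ x < ⊤ → Hcan1Rel d X ρ (φ t s x) < ⊤)
    -- semigroup property
    (hsemi : ∀ s u t : ℝ, 0 ≤ s → s ≤ u → u ≤ t → ∀ x : K → ℝ, Hcan1Rel d X ρ x < ⊤ →
      φ t u (φ u s x) = φ t s x)
    -- autonomy in the mean along a relative canonical macrostate
    (hauto : ∀ x : K → ℝ, Hcan1Rel d X ρ x < ⊤ →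
      ∃ σ : ∀ N, Matrix (Fin (d N)) (Fin (d N)) ℂ, ConcMean d X σ x ∧
        Filter.liminf
          (fun N : ℕ => (((N : ℝ)⁻¹ * relEntropy (σ N) (ρ N) : ℝ) : EReal)) Filter.atTop
          = Hcan1Rel d X ρ x ∧
        ∀ t s : ℝ, 0 ≤ s → s ≤ t → ∀ k : K,
          Filter.Tendsto (fun N => expVal (σ N) (τ N t s (X N k))) Filter.atTop
            (nhds (φ t s x k : ℂ))) :
    ∀ x : K → ℝ, Hcan1Rel d X ρ x < ⊤ → ∀ t₁ t₂ : ℝ, 0 ≤ t₁ → t₁ ≤ t₂ →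
      Hcan1Rel d X ρ (φ t₂ 0 x) ≤ Hcan1Rel d X ρ (φ t₁ 0 x) := by
  intro x hx t₁ t₂ ht₁ ht₁₂
  set y := φ t₁ 0 x with hy
  have hyΩ : Hcan1Rel d X ρ y < ⊤ := hφΩ t₁ 0 le_rfl ht₁ x hx
  obtain ⟨σ, hσconc, hσlim, hσauto⟩ := hauto y hyΩ
  -- evolved states
  have hσ' : ∀ N, ∃ σ', IsDensity σ' ∧ ∀ A, expVal σ' A = expVal (σ N) (τ N t₂ t₁ A) :=
    fun N => hstate N t₂ t₁ ht₁ ht₁₂ (σ N) (hσconc.1 N)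
  choose σ' hσ'dens hσ'exp using hσ'
  have hφeq : φ t₂ t₁ y = φ t₂ 0 x := hsemi 0 t₁ t₂ le_rfl ht₁ ht₁₂ x hx
  -- σ' concentrates in the mean at φ t₂ 0 x
  have hconc' : ConcMean d X σ' (φ t₂ 0 x) := by
    refine ⟨hσ'dens, fun k => ?_⟩
    have := hσauto t₂ t₁ ht₁ ht₁₂ k
    rw [hφeq] at this
    simpa [hσ'exp] using this
  -- entropy contraction
  have hle : ∀ N : ℕ,
      (((N : ℝ)⁻¹ * relEntropy (σ' N) (ρ N) : ℝ) : EReal)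
        ≤ (((N : ℝ)⁻¹ * relEntropy (σ N) (ρ N) : ℝ) : EReal) := by
    intro N
    have hρd := (hρ N).1
    have hcon := hcontract N t₂ t₁ ht₁ ht₁₂ (σ N) (ρ N) (σ' N) (ρ N)
      (hσconc.1 N) hρd (hσ'dens N) hρd (hσ'exp N)
      (fun A => (hρinv N t₂ t₁ ht₁ ht₁₂ A).symm)
    exact_mod_cast mul_le_mul_of_nonneg_left hcon (by positivity)
  have hliminf :
      Filter.liminf (fun N : ℕ => (((N : ℝ)⁻¹ * relEntropy (σ' N) (ρ N) : ℝ) : EReal))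
          Filter.atTop
        ≤ Filter.liminf (fun N : ℕ => (((N : ℝ)⁻¹ * relEntropy (σ N) (ρ N) : ℝ) : EReal))
          Filter.atTop :=
    Filter.liminf_le_liminf (Filter.Eventually.of_forall hle)
  have hmem : Hcan1Rel d X ρ (φ t₂ 0 x)
      ≤ Filter.liminf (fun N : ℕ => (((N : ℝ)⁻¹ * relEntropy (σ' N) (ρ N) : ℝ) : EReal))
          Filter.atTop :=
    sInf_le ⟨σ', hconc', rfl⟩
  calc Hcan1Rel d X ρ (φ t₂ 0 x) ≤ _ := hmem
    _ ≤ _ := hliminf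
    _ = Hcan1Rel d X ρ y := hσlim
end

section
/- Let (X^N) be Hermitian matrices on ℂ^{d_N} with sup_N ‖X^N‖ < ∞ and (ω^N) states. Assume there is an open interval I ∋ 0 such that ψ(t) = lim_{N→∞} (1/N) log ω^N(e^{tN X^N}) exists for every t ∈ I, and that ψ is differentiable at 0 with ψ'(0) = x. Then for every δ > 0 there exist C > 0 and N_0 such that ω^N(Q_{X^N}(ℝ ∖ (x − δ, x + δ))) ≤ e^{−CN} for all N > N_0. -/
open scoped Matrix Matrix.Norms.L2Operator ComplexOrder

section AuxConc
open Matrix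
variable {d : ℕ}

theorem trace_mul_cfc' {A : Matrix (Fin d) (Fin d) ℂ} (hA : A.IsHermitian)
    (σ : Matrix (Fin d) (Fin d) ℂ) (f : ℝ → ℝ) :
    (σ * hA.cfc f).trace =
      ∑ i, ((f (hA.eigenvalues i) : ℂ) *
        ((star (hA.eigenvectorUnitary : Matrix (Fin d) (Fin d) ℂ) * σ *
          (hA.eigenvectorUnitary : Matrix (Fin d) (Fin d) ℂ)) i i)) := by
  set U : Matrix (Fin d) (Fin d) ℂ := (hA.eigenvectorUnitary : Matrix (Fin d) (Fin d) ℂ) with hU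
  set D := diagonal (RCLike.ofReal ∘ f ∘ hA.eigenvalues : Fin d → ℂ) with hD
  have h1 : (σ * hA.cfc f).trace = ((star U * σ * U) * D).trace := by
    rw [Matrix.IsHermitian.cfc, Unitary.conjStarAlgAut_apply, ← hU, ← hD]
    rw [show σ * (U * D * star U) = (σ * U * D) * star U by
      simp only [mul_assoc], Matrix.trace_mul_comm]
    simp only [mul_assoc]
  rw [h1, hD]
  simp only [Matrix.trace, Matrix.diag_apply, Matrix.mul_diagonal, Function.comp_apply,
    RCLike.ofReal_alg, smul_eq_mul, mul_one]
  exact Finset.sum_congr rfl fun i _ => by rw [Complex.real_smul, mul_one, mul_comm]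

theorem expVal_cfc_re {A : Matrix (Fin d) (Fin d) ℂ} (hA : A.IsHermitian)
    (σ : Matrix (Fin d) (Fin d) ℂ) (f : ℝ → ℝ) :
    (expVal σ (hA.cfc f)).re =
      ∑ i, f (hA.eigenvalues i) *
        ((star (hA.eigenvectorUnitary : Matrix (Fin d) (Fin d) ℂ) * σ *
          (hA.eigenvectorUnitary : Matrix (Fin d) (Fin d) ℂ)) i i).re := by
  rw [expVal, trace_mul_cfc', Complex.re_sum]
  exact Finset.sum_congr rfl fun i _ => by simp

theorem exp_smul_eq_cfc (c : ℝ) {A : Matrix (Fin d) (Fin d) ℂ} (hA : A.IsHermitian) :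
    NormedSpace.exp (c • A) = hA.cfc (fun r => Real.exp (c * r)) := by
  set U : Matrix (Fin d) (Fin d) ℂ := (hA.eigenvectorUnitary : Matrix (Fin d) (Fin d) ℂ) with hU
  have hUunit : IsUnit U := ⟨Unitary.toUnits hA.eigenvectorUnitary, rfl⟩
  have hUinv : U⁻¹ = star U := by
    apply Matrix.inv_eq_left_inv
    rw [hU]; exact Unitary.coe_star_mul_self _
  have h1 : c • A = U * (diagonal (fun i => (↑(c * hA.eigenvalues i) : ℂ))) * U⁻¹ := by
    rw [hUinv]
    conv_lhs => rw [hA.spectral_theorem, Unitary.conjStarAlgAut_apply, ← hU]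
    rw [← smul_mul_assoc, ← mul_smul_comm]
    congr 2
    ext i j
    by_cases h : i = j <;> simp [Matrix.diagonal_apply, h, Complex.real_smul]
  rw [h1, Matrix.exp_conj U _ hUunit, Matrix.exp_diagonal, Matrix.IsHermitian.cfc,
    Unitary.conjStarAlgAut_apply, hUinv]
  congr 2
  rw [Pi.exp_def]
  ext i j
  by_cases h : i = j <;>
    simp [Matrix.diagonal_apply, h, ← Complex.exp_eq_exp_ℂ, Complex.ofReal_exp,
      Complex.ofReal_mul]

theorem weight_nonneg {σ : Matrix (Fin d) (Fin d) ℂ} (hσ : σ.PosSemidef)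
    {A : Matrix (Fin d) (Fin d) ℂ} (hA : A.IsHermitian) (i : Fin d) :
    0 ≤ ((star (hA.eigenvectorUnitary : Matrix (Fin d) (Fin d) ℂ) * σ *
          (hA.eigenvectorUnitary : Matrix (Fin d) (Fin d) ℂ)) i i).re := by
  have hM : (star (hA.eigenvectorUnitary : Matrix (Fin d) (Fin d) ℂ) * σ *
      (hA.eigenvectorUnitary : Matrix (Fin d) (Fin d) ℂ)).PosSemidef := by
    rw [Matrix.star_eq_conjTranspose]
    exact hσ.conjTranspose_mul_mul_same _
  have h := hM.dotProduct_mulVec_nonneg (Pi.single i 1)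
  simp [dotProduct, Pi.single_apply] at h
  exact (Complex.le_def.mp h).1

theorem weight_sum {σ : Matrix (Fin d) (Fin d) ℂ} (hσ : σ.trace = 1)
    {A : Matrix (Fin d) (Fin d) ℂ} (hA : A.IsHermitian) :
    ∑ i, ((star (hA.eigenvectorUnitary : Matrix (Fin d) (Fin d) ℂ) * σ *
          (hA.eigenvectorUnitary : Matrix (Fin d) (Fin d) ℂ)) i i).re = 1 := by
  set U : Matrix (Fin d) (Fin d) ℂ := (hA.eigenvectorUnitary : Matrix (Fin d) (Fin d) ℂ) with hU
  have h1 : (star U * σ * U).trace = σ.trace := by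
    rw [Matrix.trace_mul_cycle, show U * star U = 1 from by
      rw [hU]; exact Unitary.coe_mul_star_self _, one_mul]
  have h2 : ∑ i, ((star U * σ * U) i i) = (1:ℂ) := by
    have h : ∑ i, ((star U * σ * U) i i) = (star U * σ * U).trace := rfl
    rw [h, h1, hσ]
  calc ∑ i, ((star U * σ * U) i i).re = (∑ i, (star U * σ * U) i i).re := by
        rw [Complex.re_sum]
    _ = 1 := by rw [h2]; simp

end AuxConc

set_option maxHeartbeats 2000000 in
/-- If the cumulant generating functions
`(1/N) log ω^N(e^{tN X^N})` converge on an open interval around `0` to a function `ψ`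
differentiable at `0` with `ψ'(0) = x`, then `(ω^N)` concentrates exponentially at `x`. -/
theorem exp_concentration_of_gen_function
    (d : ℕ → ℕ) (X : ∀ N, Matrix (Fin (d N)) (Fin (d N)) ℂ)
    (hherm : ∀ N, (X N).IsHermitian) (hbdd : ∃ C : ℝ, ∀ N, ‖X N‖ ≤ C)
    (σ : ∀ N, Matrix (Fin (d N)) (Fin (d N)) ℂ) (hσ : ∀ N, IsDensity (σ N))
    (I : Set ℝ) (hI : IsOpen I) (hI0 : (0 : ℝ) ∈ I) (ψ : ℝ → ℝ)
    (hψ : ∀ t ∈ I, Filter.Tendsto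
      (fun N : ℕ => (N : ℝ)⁻¹ *
        Real.log ((expVal (σ N) (NormedSpace.exp ((t * N) • X N))).re))
      Filter.atTop (nhds (ψ t)))
    (x : ℝ) (hderiv : HasDerivAt ψ x 0) :
    ∀ δ > (0:ℝ), ∃ C > (0:ℝ), ∃ N₀ : ℕ, ∀ N > N₀,
      (expVal (σ N) (specProj ((Set.Ioo (x - δ) (x + δ))ᶜ) (X N))).re
        ≤ Real.exp (-C * N) := by
  intro δ hδ
  -- ψ 0 = 0
  have hψ0 : ψ 0 = 0 := by
    have h0 := hψ 0 hI0
    have heq : (fun N : ℕ => (N : ℝ)⁻¹ *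
        Real.log ((expVal (σ N) (NormedSpace.exp (((0:ℝ) * N) • X N))).re))
        = fun _ => (0:ℝ) := by
      funext N
      rw [show ((0:ℝ) * (N:ℝ)) • X N = (0 : Matrix (Fin (d N)) (Fin (d N)) ℂ) by
        rw [zero_mul, zero_smul], NormedSpace.exp_zero]
      rw [show expVal (σ N) 1 = (σ N).trace by rw [expVal, mul_one], (hσ N).2]
      simp
    rw [heq] at h0
    exact tendsto_nhds_unique h0 tendsto_const_nhds
  obtain ⟨r, hr, hrI⟩ : ∃ r > 0, Metric.ball (0:ℝ) r ⊆ I := Metric.isOpen_iff.mp hI 0 hI0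
  have hslope := hasDerivAt_iff_tendsto_slope.mp hderiv
  obtain ⟨ε, hε, hεs⟩ := Metric.tendsto_nhdsWithin_nhds.mp hslope (δ/2) (by positivity)
  set t := min r ε / 2 with ht
  have ht0 : 0 < t := by positivity
  have htr : t < r := by
    have := min_le_left r ε; simp only [ht]; linarith
  have htε : t < ε := by
    have := min_le_right r ε; simp only [ht]; linarith
  have htI : t ∈ I := hrI (by simp [Real.ball_eq_Ioo]; constructor <;> linarith)
  have hmtI : -t ∈ I := hrI (by simp [Real.ball_eq_Ioo]; constructor <;> linarith)
  -- slope bounds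
  have h1 : ψ t < t * (x + δ/2) := by
    have h := hεs (x := t) (by simp [ht0.ne']) (by rw [Real.dist_eq]; simp [abs_of_pos ht0]; linarith)
    rw [Real.dist_eq, slope_def_field] at h
    have h' := (abs_lt.mp h).2
    rw [hψ0] at h'
    have : (ψ t - 0) / (t - 0) = ψ t / t := by ring_nf
    rw [this] at h'
    have := (div_lt_iff₀ ht0).mp (by linarith : ψ t / t < x + δ/2)
    linarith [this]
  have h2 : ψ (-t) < t * (δ/2 - x) := by
    have h := hεs (x := -t) (by simp [ht0.ne'])
      (by rw [Real.dist_eq]; simp [abs_of_pos ht0]; linarith)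
    rw [Real.dist_eq, slope_def_field] at h
    have h' := (abs_lt.mp h).1
    rw [hψ0] at h'
    have heq : (ψ (-t) - 0) / (-t - 0) = -(ψ (-t) / t) := by
      rw [sub_zero, sub_zero, div_neg]
    rw [heq] at h'
    have hlt : x - δ/2 < -(ψ (-t) / t) := by linarith
    have : ψ (-t) / t < δ/2 - x := by linarith
    have := (div_lt_iff₀ ht0).mp this
    linarith
  -- eventual bounds
  have Ev1 := (hψ t htI).eventually_lt_const (show ψ t < ψ t + t*δ/4 by nlinarith)
  have Ev2 := (hψ (-t) hmtI).eventually_lt_const (show ψ (-t) < ψ (-t) + t*δ/4 by nlinarith)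
  have Ev3 : ∀ᶠ N : ℕ in Filter.atTop, Real.log 2 ≤ (N:ℝ) * (t*δ/8) := by
    have : Filter.Tendsto (fun N : ℕ => (N:ℝ) * (t*δ/8)) Filter.atTop Filter.atTop :=
      (tendsto_natCast_atTop_atTop).atTop_mul_const (by positivity)
    exact this.eventually_ge_atTop _
  have Ev4 : ∀ᶠ N : ℕ in Filter.atTop, 1 ≤ N := Filter.eventually_ge_atTop 1
  obtain ⟨N₀, hN₀⟩ := Filter.eventually_atTop.mp (((Ev1.and Ev2).and Ev3).and Ev4)
  refine ⟨t*δ/8, by positivity, N₀, ?_⟩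
  intro N hN
  obtain ⟨⟨⟨hNa, hNb⟩, hN2⟩, hN1⟩ := hN₀ N hN.le
  -- setup
  have hA := hherm N
  set U : Matrix (Fin (d N)) (Fin (d N)) ℂ :=
    (hA.eigenvectorUnitary : Matrix (Fin (d N)) (Fin (d N)) ℂ) with hU
  set lam := hA.eigenvalues with hlam
  set w : Fin (d N) → ℝ := fun i => ((star U * σ N * U) i i).re with hw
  have hw0 : ∀ i, 0 ≤ w i := fun i => weight_nonneg (hσ N).1 hA i
  have hw1 : ∑ i, w i = 1 := weight_sum (hσ N).2 hA
  have hNR : (1:ℝ) ≤ (N:ℝ) := by exact_mod_cast hN1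
  have hNpos : (0:ℝ) < N := by linarith
  have htN : (0:ℝ) < t * N := mul_pos ht0 hNpos
  -- the exponential moments
  set Ep := (expVal (σ N) (NormedSpace.exp ((t * (N:ℝ)) • X N))).re with hEp
  set Em := (expVal (σ N) (NormedSpace.exp ((-t * (N:ℝ)) • X N))).re with hEm
  have hEp_eq : Ep = ∑ i, Real.exp ((t * (N:ℝ)) * lam i) * w i := by
    rw [hEp, exp_smul_eq_cfc (t * (N:ℝ)) hA, expVal_cfc_re]
  have hEm_eq : Em = ∑ i, Real.exp ((-t * (N:ℝ)) * lam i) * w i := by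
    rw [hEm, exp_smul_eq_cfc (-t * (N:ℝ)) hA, expVal_cfc_re]
  have hwex : ∃ i, 0 < w i := by
    by_contra hcon
    push_neg at hcon
    have : ∑ i, w i ≤ 0 := Finset.sum_nonpos fun i _ => hcon i
    linarith
  obtain ⟨i₀, hi₀⟩ := hwex
  have hEp_pos : 0 < Ep := by
    rw [hEp_eq]
    exact Finset.sum_pos' (fun i _ => mul_nonneg (Real.exp_pos _).le (hw0 i))
      ⟨i₀, Finset.mem_univ _, mul_pos (Real.exp_pos _) hi₀⟩
  have hEm_pos : 0 < Em := by
    rw [hEm_eq]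
    exact Finset.sum_pos' (fun i _ => mul_nonneg (Real.exp_pos _).le (hw0 i))
      ⟨i₀, Finset.mem_univ _, mul_pos (Real.exp_pos _) hi₀⟩
  have hEp_le : Ep ≤ Real.exp ((N:ℝ) * (ψ t + t*δ/4)) := by
    have hlog : Real.log Ep < (N:ℝ) * (ψ t + t*δ/4) := by
      have e1 : Real.log Ep = (N:ℝ) * ((N:ℝ)⁻¹ * Real.log Ep) := by
        field_simp
      rw [e1]
      exact mul_lt_mul_of_pos_left hNa hNpos
    calc Ep = Real.exp (Real.log Ep) := (Real.exp_log hEp_pos).symm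
      _ ≤ _ := Real.exp_le_exp.mpr hlog.le
  have hEm_le : Em ≤ Real.exp ((N:ℝ) * (ψ (-t) + t*δ/4)) := by
    have hlog : Real.log Em < (N:ℝ) * (ψ (-t) + t*δ/4) := by
      have e1 : Real.log Em = (N:ℝ) * ((N:ℝ)⁻¹ * Real.log Em) := by
        field_simp
      rw [e1]
      exact mul_lt_mul_of_pos_left hNb hNpos
    calc Em = Real.exp (Real.log Em) := (Real.exp_log hEm_pos).symm
      _ ≤ _ := Real.exp_le_exp.mpr hlog.le
  -- indicator bound
  have hgb : ∀ l : ℝ, Set.indicator ((Set.Ioo (x-δ) (x+δ))ᶜ) (1:ℝ→ℝ) l ≤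
      Real.exp ((t * (N:ℝ)) * (l - (x+δ))) + Real.exp ((t * (N:ℝ)) * ((x-δ) - l)) := by
    intro l
    by_cases hl : l ∈ (Set.Ioo (x-δ) (x+δ))ᶜ
    · rw [Set.indicator_of_mem hl]
      simp only [Pi.one_apply]
      rw [Set.mem_compl_iff, Set.mem_Ioo, not_and_or, not_lt, not_lt] at hl
      rcases hl with hl | hl
      · have : (1:ℝ) ≤ Real.exp ((t * (N:ℝ)) * ((x-δ) - l)) :=
          Real.one_le_exp (by nlinarith)
        linarith [Real.exp_pos ((t * (N:ℝ)) * (l - (x+δ)))]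
      · have : (1:ℝ) ≤ Real.exp ((t * (N:ℝ)) * (l - (x+δ))) :=
          Real.one_le_exp (by nlinarith)
        linarith [Real.exp_pos ((t * (N:ℝ)) * ((x-δ) - l))]
    · rw [Set.indicator_of_notMem hl]
      positivity
  -- main estimate
  have hP_eq : (expVal (σ N) (specProj ((Set.Ioo (x - δ) (x + δ))ᶜ) (X N))).re =
      ∑ i, Set.indicator ((Set.Ioo (x-δ) (x+δ))ᶜ) (1:ℝ→ℝ) (lam i) * w i := by
    rw [specProj, fc, dif_pos hA, expVal_cfc_re]
  rw [hP_eq]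
  have step1 : ∑ i, Set.indicator ((Set.Ioo (x-δ) (x+δ))ᶜ) (1:ℝ→ℝ) (lam i) * w i ≤
      Real.exp (-((t * (N:ℝ)) * (x+δ))) * Ep + Real.exp ((t * (N:ℝ)) * (x-δ)) * Em := by
    calc ∑ i, Set.indicator ((Set.Ioo (x-δ) (x+δ))ᶜ) (1:ℝ→ℝ) (lam i) * w i
        ≤ ∑ i, (Real.exp ((t * (N:ℝ)) * (lam i - (x+δ))) +
            Real.exp ((t * (N:ℝ)) * ((x-δ) - lam i))) * w i :=
          Finset.sum_le_sum fun i _ => mul_le_mul_of_nonneg_right (hgb _) (hw0 i)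
      _ = Real.exp (-((t * (N:ℝ)) * (x+δ))) * Ep + Real.exp ((t * (N:ℝ)) * (x-δ)) * Em := by
          rw [hEp_eq, hEm_eq, Finset.mul_sum, Finset.mul_sum, ← Finset.sum_add_distrib]
          refine Finset.sum_congr rfl fun i _ => ?_
          rw [add_mul, ← mul_assoc, ← mul_assoc, ← Real.exp_add, ← Real.exp_add]
          ring_nf
  have step2 : Real.exp (-((t * (N:ℝ)) * (x+δ))) * Ep + Real.exp ((t * (N:ℝ)) * (x-δ)) * Em ≤
      2 * Real.exp (-((N:ℝ) * (t*δ/4))) := by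
    have b1 : Real.exp (-((t * (N:ℝ)) * (x+δ))) * Ep ≤ Real.exp (-((N:ℝ) * (t*δ/4))) := by
      calc Real.exp (-((t * (N:ℝ)) * (x+δ))) * Ep
          ≤ Real.exp (-((t * (N:ℝ)) * (x+δ))) * Real.exp ((N:ℝ) * (ψ t + t*δ/4)) :=
            mul_le_mul_of_nonneg_left hEp_le (Real.exp_pos _).le
        _ = Real.exp (-((t * (N:ℝ)) * (x+δ)) + (N:ℝ) * (ψ t + t*δ/4)) := by
            rw [← Real.exp_add]
        _ ≤ Real.exp (-((N:ℝ) * (t*δ/4))) := Real.exp_le_exp.mpr (by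
            nlinarith [mul_le_mul_of_nonneg_left h1.le hNpos.le])
    have b2 : Real.exp ((t * (N:ℝ)) * (x-δ)) * Em ≤ Real.exp (-((N:ℝ) * (t*δ/4))) := by
      calc Real.exp ((t * (N:ℝ)) * (x-δ)) * Em
          ≤ Real.exp ((t * (N:ℝ)) * (x-δ)) * Real.exp ((N:ℝ) * (ψ (-t) + t*δ/4)) :=
            mul_le_mul_of_nonneg_left hEm_le (Real.exp_pos _).le
        _ = Real.exp ((t * (N:ℝ)) * (x-δ) + (N:ℝ) * (ψ (-t) + t*δ/4)) := by
            rw [← Real.exp_add]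
        _ ≤ Real.exp (-((N:ℝ) * (t*δ/4))) := Real.exp_le_exp.mpr (by
            nlinarith [mul_le_mul_of_nonneg_left h2.le hNpos.le])
    linarith
  have step3 : 2 * Real.exp (-((N:ℝ) * (t*δ/4))) ≤ Real.exp (-(t*δ/8) * (N:ℝ)) := by
    have h2le : (2:ℝ) ≤ Real.exp ((N:ℝ) * (t*δ/8)) := by
      rw [show (2:ℝ) = Real.exp (Real.log 2) from (Real.exp_log two_pos).symm]
      exact Real.exp_le_exp.mpr hN2
    calc 2 * Real.exp (-((N:ℝ) * (t*δ/4)))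
        ≤ Real.exp ((N:ℝ) * (t*δ/8)) * Real.exp (-((N:ℝ) * (t*δ/4))) :=
          mul_le_mul_of_nonneg_right h2le (Real.exp_pos _).le
      _ = Real.exp ((N:ℝ) * (t*δ/8) + -((N:ℝ) * (t*δ/4))) := by rw [← Real.exp_add]
      _ = Real.exp (-(t*δ/8) * (N:ℝ)) := by ring_nf
  linarith
end

section
/- Let σ be a density matrix and H a Hermitian matrix on ℂ^d. Then −Tr(σ log σ) + Tr(σ H) ≤ log Tr(e^H), with equality if and only if σ = e^H / Tr(e^H). -/
open scoped Matrix Matrix.Norms.L2Operator ComplexOrder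

private lemma gibbs_key_ineq {p w t : ℝ} (hp : 0 ≤ p) (hw : 0 ≤ w) (ht : 0 < t) :
    p * w * (Real.log t - Real.log p) ≤ w * t - p * w ∧
    (p * w * (Real.log t - Real.log p) = w * t - p * w ↔ w = 0 ∨ p = t) := by
  rcases hw.eq_or_lt with hw0 | hw0
  · rw [← hw0]
    simp
  · rcases hp.eq_or_lt with hp0 | hp0
    · rw [← hp0]
      refine ⟨by nlinarith [mul_pos hw0 ht], ?_, ?_⟩
      · intro h
        exfalso
        nlinarith [mul_pos hw0 ht]
      · rintro (h | h)
        · exact absurd h hw0.ne'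
        · exact absurd h.symm ht.ne'
    · have hdiv : 0 < t / p := div_pos ht hp0
      have h4 : p * (t / p - 1) = t - p := by field_simp
      have hlog : p * (Real.log t - Real.log p) ≤ t - p := by
        have h1 : Real.log (t / p) ≤ t / p - 1 := Real.log_le_sub_one_of_pos hdiv
        rw [Real.log_div ht.ne' hp0.ne'] at h1
        nlinarith [mul_le_mul_of_nonneg_left h1 hp0.le]
      refine ⟨?_, ?_, ?_⟩
      · calc p * w * (Real.log t - Real.log p)
            = w * (p * (Real.log t - Real.log p)) := by ring
          _ ≤ w * (t - p) := mul_le_mul_of_nonneg_left hlog hw0.le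
          _ = w * t - p * w := by ring
      · intro hEq
        by_contra hne
        push_neg at hne
        obtain ⟨hw', hpt⟩ := hne
        have hq : t / p ≠ 1 := by
          intro hq1
          rw [div_eq_one_iff_eq hp0.ne'] at hq1
          exact hpt hq1.symm
        have h1 : Real.log (t / p) < t / p - 1 := Real.log_lt_sub_one_of_pos hdiv hq
        rw [Real.log_div ht.ne' hp0.ne'] at h1
        have h3 : p * (Real.log t - Real.log p) < t - p := by
          nlinarith [mul_lt_mul_of_pos_left h1 hp0]
        have h5 : p * w * (Real.log t - Real.log p) < w * t - p * w := by
          nlinarith [mul_lt_mul_of_pos_left h3 hw0]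
        linarith [hEq.le, h5]
      · rintro (h | h)
        · exact absurd h hw0.ne'
        · rw [h, sub_self, mul_zero]
          ring

private lemma gibbs_trace_conj_diag {d : ℕ} (U : Matrix (Fin d) (Fin d) ℂ) (a : Fin d → ℂ)
    (hU : star U * U = 1) :
    (U * Matrix.diagonal a * star U).trace = ∑ i, a i := by
  rw [Matrix.trace_mul_cycle, hU, one_mul, Matrix.trace_diagonal]

private lemma gibbs_trace_diag_conj {d : ℕ} (a b : Fin d → ℂ) (C : Matrix (Fin d) (Fin d) ℂ) :
    (Matrix.diagonal a * (star C * (Matrix.diagonal b * C))).trace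
      = ∑ i, ∑ j, a i * ((starRingEnd ℂ) (C j i) * (b j * C j i)) := by
  simp only [Matrix.trace, Matrix.diag_apply, Matrix.diagonal_mul]
  simp only [Matrix.mul_apply, Matrix.diagonal_mul, Matrix.star_apply, RCLike.star_def,
    Finset.mul_sum]
  simp [Matrix.diagonal_apply, ite_mul, zero_mul, mul_ite, mul_zero, Finset.sum_ite_eq,
    Finset.mem_univ]

/-- Gibbs variational principle: for a density matrix `σ` and
Hermitian `H`, `−Tr(σ log σ) + Tr(σ H) ≤ log Tr(e^H)`, with equality if and only if
`σ = e^H / Tr(e^H)`. -/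
theorem gibbs_variational_principle {d : ℕ} (σ H : Matrix (Fin d) (Fin d) ℂ)
    (hσ : IsDensity σ) (hH : H.IsHermitian) :
    vnEntropy σ + (expVal σ H).re ≤ Real.log ((NormedSpace.exp H).trace.re) ∧
    (vnEntropy σ + (expVal σ H).re = Real.log ((NormedSpace.exp H).trace.re) ↔
      σ = ((NormedSpace.exp H).trace)⁻¹ • NormedSpace.exp H) := by
  classical
  obtain ⟨hpsd, htr⟩ := hσ
  have hσh : σ.IsHermitian := hpsd.1
  set U : Matrix (Fin d) (Fin d) ℂ := (hσh.eigenvectorUnitary : Matrix (Fin d) (Fin d) ℂ)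
    with hUdef
  set V : Matrix (Fin d) (Fin d) ℂ := (hH.eigenvectorUnitary : Matrix (Fin d) (Fin d) ℂ)
    with hVdef
  set p : Fin d → ℝ := hσh.eigenvalues with hpdef
  set hh : Fin d → ℝ := hH.eigenvalues with hhdef
  have hU1 : star U * U = 1 := Unitary.coe_star_mul_self hσh.eigenvectorUnitary
  have hU2 : U * star U = 1 := Unitary.coe_mul_star_self hσh.eigenvectorUnitary
  have hV1 : star V * V = 1 := Unitary.coe_star_mul_self hH.eigenvectorUnitary
  have hV2 : V * star V = 1 := Unitary.coe_mul_star_self hH.eigenvectorUnitary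
  have cancelU : ∀ X : Matrix (Fin d) (Fin d) ℂ, star U * (U * X) = X := fun X => by
    rw [← Matrix.mul_assoc, hU1, Matrix.one_mul]
  have cancelU' : ∀ X : Matrix (Fin d) (Fin d) ℂ, U * (star U * X) = X := fun X => by
    rw [← Matrix.mul_assoc, hU2, Matrix.one_mul]
  have cancelV : ∀ X : Matrix (Fin d) (Fin d) ℂ, star V * (V * X) = X := fun X => by
    rw [← Matrix.mul_assoc, hV1, Matrix.one_mul]
  set C : Matrix (Fin d) (Fin d) ℂ := star V * U with hCdef
  have hCs : star C = star U * V := by rw [hCdef, star_mul, star_star]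
  have hCC : star C * C = 1 := by
    rw [hCs, hCdef]
    calc star U * V * (star V * U) = star U * (V * (star V * U)) := by rw [Matrix.mul_assoc]
      _ = star U * (V * star V * U) := by rw [Matrix.mul_assoc]
      _ = star U * U := by rw [hV2, Matrix.one_mul]
      _ = 1 := hU1
  have hCC' : C * star C = 1 := by
    rw [hCs, hCdef]
    calc star V * U * (star U * V) = star V * (U * (star U * V)) := by rw [Matrix.mul_assoc]
      _ = star V * (U * star U * V) := by rw [Matrix.mul_assoc]
      _ = star V * V := by rw [hU2, Matrix.one_mul]
      _ = 1 := hV1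
  have hspecσ : σ = U * Matrix.diagonal (fun i => ((p i : ℝ) : ℂ)) * star U := by
    conv_lhs => rw [hσh.spectral_theorem]
    rfl
  have hspecH : H = V * Matrix.diagonal (fun j => ((hh j : ℝ) : ℂ)) * star V := by
    conv_lhs => rw [hH.spectral_theorem]
    rfl
  -- the exponential of H
  have hexp : NormedSpace.exp H
      = V * Matrix.diagonal (fun j => ((Real.exp (hh j) : ℝ) : ℂ)) * star V := by
    set Vu : (Matrix (Fin d) (Fin d) ℂ)ˣ := ⟨V, star V, hV2, hV1⟩ with hVu
    have h1 : H = (Vu : Matrix (Fin d) (Fin d) ℂ) *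
        Matrix.diagonal (fun j => ((hh j : ℝ) : ℂ)) * (↑Vu⁻¹ : Matrix (Fin d) (Fin d) ℂ) :=
      hspecH
    conv_lhs => rw [h1]
    rw [Matrix.exp_units_conj, Matrix.exp_diagonal]
    have h2 : (NormedSpace.exp fun j => ((hh j : ℝ) : ℂ))
        = fun j => ((Real.exp (hh j) : ℝ) : ℂ) := by
      funext j
      rw [Pi.coe_exp, ← Complex.exp_eq_exp_ℂ, ← Complex.ofReal_exp]
    rw [h2]
    rfl
  -- basic scalar data
  have htrσ : σ.trace = ((∑ i, p i : ℝ) : ℂ) := by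
    rw [hspecσ, gibbs_trace_conj_diag U _ hU1, ← Complex.ofReal_sum]
  have hsump : (∑ i, p i) = 1 := by
    have h1 := htr
    rw [htrσ] at h1
    exact_mod_cast h1
  have hne : (Finset.univ : Finset (Fin d)).Nonempty :=
    Finset.nonempty_of_sum_ne_zero (f := p) (by rw [hsump]; norm_num)
  set Z : ℝ := ∑ j, Real.exp (hh j) with hZdef
  have hZpos : 0 < Z := Finset.sum_pos (fun j _ => Real.exp_pos _) hne
  have htrexp : (NormedSpace.exp H).trace = (Z : ℂ) := by
    rw [hexp, gibbs_trace_conj_diag V _ hV1, ← Complex.ofReal_sum]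
  have hre : (NormedSpace.exp H).trace.re = Z := by
    rw [htrexp]; exact Complex.ofReal_re Z
  set t : Fin d → ℝ := fun j => Real.exp (hh j) / Z with htdef
  set w : Fin d → Fin d → ℝ := fun i j => Complex.normSq (C j i) with hwdef
  have htpos : ∀ j, 0 < t j := fun j => div_pos (Real.exp_pos _) hZpos
  have hwnn : ∀ i j, 0 ≤ w i j := fun i j => Complex.normSq_nonneg _
  have hpnn : ∀ i, 0 ≤ p i := fun i => hpsd.eigenvalues_nonneg i
  have hwrow : ∀ i, ∑ j, w i j = 1 := by
    intro i
    have h1 : ((1 : Matrix (Fin d) (Fin d) ℂ)) i i = 1 := by simp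
    rw [← hCC, Matrix.mul_apply] at h1
    have h2 : ∀ j, (star C) i j * C j i = ((w i j : ℝ) : ℂ) := by
      intro j
      rw [Matrix.star_apply, RCLike.star_def]
      exact Complex.normSq_eq_conj_mul_self.symm
    rw [Finset.sum_congr rfl (fun j _ => h2 j), ← Complex.ofReal_sum] at h1
    exact_mod_cast h1
  have hwcol : ∀ j, ∑ i, w i j = 1 := by
    intro j
    have h1 : ((1 : Matrix (Fin d) (Fin d) ℂ)) j j = 1 := by simp
    rw [← hCC', Matrix.mul_apply] at h1
    have h2 : ∀ i, C j i * (star C) i j = ((w i j : ℝ) : ℂ) := by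
      intro i
      rw [Matrix.star_apply, RCLike.star_def]
      exact Complex.mul_conj (C j i)
    rw [Finset.sum_congr rfl (fun i _ => h2 i), ← Complex.ofReal_sum] at h1
    exact_mod_cast h1
  -- entropy
  have hfcσ : fc Real.log σ
      = U * Matrix.diagonal (fun i => ((Real.log (p i) : ℝ) : ℂ)) * star U := by
    unfold fc
    rw [dif_pos hσh]
    rfl
  have hmulσ : σ * fc Real.log σ
      = U * Matrix.diagonal (fun i => ((p i * Real.log (p i) : ℝ) : ℂ)) * star U := by
    rw [hfcσ, hspecσ]
    simp only [Matrix.mul_assoc]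
    rw [cancelU, ← Matrix.mul_assoc (Matrix.diagonal _) (Matrix.diagonal _),
      Matrix.diagonal_mul_diagonal]
    have h1 : (fun i => ((p i : ℝ) : ℂ) * ((Real.log (p i) : ℝ) : ℂ))
        = fun i => ((p i * Real.log (p i) : ℝ) : ℂ) := by
      funext i
      push_cast
      ring
    rw [h1]
  have hvn : vnEntropy σ = -∑ i, p i * Real.log (p i) := by
    unfold vnEntropy
    rw [hmulσ, gibbs_trace_conj_diag U _ hU1, ← Complex.ofReal_sum, Complex.ofReal_re]
  -- energy
  have hexpH : (expVal σ H).re = ∑ i, ∑ j, p i * w i j * hh j := by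
    unfold expVal
    have e1 : σ * H = U * (Matrix.diagonal (fun i => ((p i : ℝ) : ℂ)) *
        (star C * (Matrix.diagonal (fun j => ((hh j : ℝ) : ℂ)) * C))) * star U := by
      rw [hspecσ, hspecH, hCs, hCdef]
      simp only [Matrix.mul_assoc]
      rw [hU2, Matrix.mul_one]
    rw [e1, Matrix.trace_mul_cycle, hU1, Matrix.one_mul, gibbs_trace_diag_conj]
    have hcast : (∑ i, ∑ j, ((p i : ℝ) : ℂ) *
          ((starRingEnd ℂ) (C j i) * (((hh j : ℝ) : ℂ) * C j i)))
        = ((∑ i, ∑ j, p i * w i j * hh j : ℝ) : ℂ) := by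
      rw [Complex.ofReal_sum]
      refine Finset.sum_congr rfl fun i _ => ?_
      rw [Complex.ofReal_sum]
      refine Finset.sum_congr rfl fun j _ => ?_
      have hz : (starRingEnd ℂ) (C j i) * C j i = ((w i j : ℝ) : ℂ) :=
        Complex.normSq_eq_conj_mul_self.symm
      calc ((p i : ℝ) : ℂ) * ((starRingEnd ℂ) (C j i) * (((hh j : ℝ) : ℂ) * C j i))
          = ((p i : ℝ) : ℂ) * ((hh j : ℝ) : ℂ) * ((starRingEnd ℂ) (C j i) * C j i) := by ring
        _ = ((p i : ℝ) : ℂ) * ((hh j : ℝ) : ℂ) * ((w i j : ℝ) : ℂ) := by rw [hz]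
        _ = ((p i * w i j * hh j : ℝ) : ℂ) := by push_cast; ring
    rw [hcast, Complex.ofReal_re]
  -- the sums
  have hlogt : ∀ j, Real.log (t j) = hh j - Real.log Z := by
    intro j
    simp only [htdef]
    rw [Real.log_div (Real.exp_ne_zero _) hZpos.ne', Real.log_exp]
  have hLHS : (∑ i, ∑ j, p i * w i j * (Real.log (t j) - Real.log (p i)))
      = (vnEntropy σ + (expVal σ H).re) - Real.log Z := by
    rw [hvn, hexpH]
    have hrow : ∀ i, (∑ j, p i * w i j * (Real.log (t j) - Real.log (p i)))
        = (∑ j, p i * w i j * hh j) - p i * Real.log Z - p i * Real.log (p i) := by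
      intro i
      have e : ∀ j, p i * w i j * (Real.log (t j) - Real.log (p i))
          = p i * w i j * hh j - (p i * (Real.log Z + Real.log (p i))) * w i j := by
        intro j
        rw [hlogt j]
        ring
      rw [Finset.sum_congr rfl (fun j _ => e j), Finset.sum_sub_distrib, ← Finset.mul_sum,
        hwrow i]
      ring
    rw [Finset.sum_congr rfl (fun i _ => hrow i), Finset.sum_sub_distrib,
      Finset.sum_sub_distrib, ← Finset.sum_mul, hsump, one_mul]
    ring
  have hsumt : (∑ j, t j) = 1 := by
    simp only [htdef]
    rw [← Finset.sum_div, ← hZdef, div_self hZpos.ne']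
  have hRHS : (∑ i, ∑ j, (w i j * t j - p i * w i j)) = 0 := by
    have h1 : (∑ i, ∑ j, (w i j * t j - p i * w i j))
        = (∑ i, ∑ j, w i j * t j) - ∑ i, ∑ j, p i * w i j := by
      rw [← Finset.sum_sub_distrib]
      exact Finset.sum_congr rfl fun i _ => by rw [Finset.sum_sub_distrib]
    have h2 : (∑ i, ∑ j, w i j * t j) = ∑ j, t j := by
      rw [Finset.sum_comm]
      exact Finset.sum_congr rfl fun j _ => by rw [← Finset.sum_mul, hwcol j, one_mul]
    have h3 : (∑ i, ∑ j, p i * w i j) = 1 := by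
      rw [Finset.sum_congr rfl fun i _ => by rw [← Finset.mul_sum, hwrow i, mul_one], hsump]
    rw [h1, h2, h3, hsumt]
    ring
  have hterm := fun i j => gibbs_key_ineq (hpnn i) (hwnn i j) (htpos j)
  have hle : (∑ i, ∑ j, p i * w i j * (Real.log (t j) - Real.log (p i)))
      ≤ ∑ i, ∑ j, (w i j * t j - p i * w i j) :=
    Finset.sum_le_sum fun i _ => Finset.sum_le_sum fun j _ => (hterm i j).1
  have hiff2 : ((∑ i, ∑ j, p i * w i j * (Real.log (t j) - Real.log (p i)))
      = ∑ i, ∑ j, (w i j * t j - p i * w i j)) ↔ ∀ i j, (w i j = 0 ∨ p i = t j) := by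
    constructor
    · intro hEq i j
      have h1 := (Finset.sum_eq_sum_iff_of_le
        (fun i _ => Finset.sum_le_sum fun j _ => (hterm i j).1)).mp hEq i (Finset.mem_univ i)
      have h2 := (Finset.sum_eq_sum_iff_of_le
        (fun j _ => (hterm i j).1)).mp h1 j (Finset.mem_univ j)
      exact (hterm i j).2.mp h2
    · intro hc
      exact Finset.sum_congr rfl fun i _ =>
        Finset.sum_congr rfl fun j _ => (hterm i j).2.mpr (hc i j)
  have hScond : (vnEntropy σ + (expVal σ H).re = Real.log Z)
      ↔ ∀ i j, (w i j = 0 ∨ p i = t j) := by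
    rw [← hiff2]
    constructor
    · intro h
      rw [hLHS, hRHS, h]
      ring
    · intro h
      rw [hLHS, hRHS] at h
      linarith
  -- the Gibbs state
  have hρ : ((NormedSpace.exp H).trace)⁻¹ • NormedSpace.exp H
      = V * Matrix.diagonal (fun j => ((t j : ℝ) : ℂ)) * star V := by
    rw [htrexp, hexp]
    have h1 : (fun j => ((t j : ℝ) : ℂ)) = ((Z : ℂ))⁻¹ • fun j => ((Real.exp (hh j) : ℝ) : ℂ) := by
      funext j
      simp only [htdef, Pi.smul_apply, smul_eq_mul]
      push_cast
      rw [div_eq_inv_mul]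
    rw [h1, Matrix.diagonal_smul, Matrix.mul_smul, Matrix.smul_mul]
  have hforward : (∀ i j, (w i j = 0 ∨ p i = t j)) →
      σ = ((NormedSpace.exp H).trace)⁻¹ • NormedSpace.exp H := by
    intro hc
    rw [hρ]
    have hE : star C * (Matrix.diagonal (fun j => ((t j : ℝ) : ℂ)) * C)
        = Matrix.diagonal (fun i => ((p i : ℝ) : ℂ)) := by
      ext i i'
      rw [Matrix.mul_apply]
      have e : ∀ j, (star C) i j * (Matrix.diagonal (fun j => ((t j : ℝ) : ℂ)) * C) j i'
          = ((p i : ℝ) : ℂ) * ((star C) i j * C j i') := by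
        intro j
        rw [Matrix.diagonal_mul]
        rcases hc i j with h0 | heq
        · have hz : C j i = 0 := by
            have h0' : Complex.normSq (C j i) = 0 := h0
            exact Complex.normSq_eq_zero.mp h0'
          rw [Matrix.star_apply, hz]
          simp
        · rw [← heq]
          ring
      rw [Finset.sum_congr rfl (fun j _ => e j), ← Finset.mul_sum]
      have h1 : (∑ j, (star C) i j * C j i') = (1 : Matrix (Fin d) (Fin d) ℂ) i i' := by
        rw [← Matrix.mul_apply, hCC]
      rw [h1]
      by_cases hii : i = i'
      · subst hii
        simp [Matrix.one_apply_eq, Matrix.diagonal_apply_eq]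
      · simp [Matrix.one_apply_ne hii, Matrix.diagonal_apply_ne _ hii]
    calc σ = U * Matrix.diagonal (fun i => ((p i : ℝ) : ℂ)) * star U := hspecσ
      _ = U * (star C * (Matrix.diagonal (fun j => ((t j : ℝ) : ℂ)) * C)) * star U := by
          rw [hE]
      _ = V * Matrix.diagonal (fun j => ((t j : ℝ) : ℂ)) * star V := by
          rw [hCs, hCdef]
          simp only [Matrix.mul_assoc]
          rw [hU2, Matrix.mul_one, cancelU']
  have hback : σ = ((NormedSpace.exp H).trace)⁻¹ • NormedSpace.exp H →
      ∀ i j, (w i j = 0 ∨ p i = t j) := by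
    intro hEq i j
    have h1 : star V * σ * U = Matrix.diagonal (fun j => ((t j : ℝ) : ℂ)) * C := by
      rw [hEq, hρ, hCdef]
      simp only [Matrix.mul_assoc]
      rw [cancelV]
    have h2 : star V * σ * U = C * Matrix.diagonal (fun i => ((p i : ℝ) : ℂ)) := by
      conv_lhs => rw [hspecσ]
      rw [hCdef]
      simp only [Matrix.mul_assoc]
      rw [hU1, Matrix.mul_one, ← Matrix.mul_assoc]
    have h3 := h1.symm.trans h2
    have h4 : ((t j : ℝ) : ℂ) * C j i = C j i * ((p i : ℝ) : ℂ) := by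
      have h5 := Matrix.ext_iff.mpr h3 j i
      rwa [Matrix.diagonal_mul, Matrix.mul_diagonal] at h5
    by_cases hz : C j i = 0
    · left
      show Complex.normSq (C j i) = 0
      rw [hz]
      simp
    · right
      have h6 : ((t j : ℝ) : ℂ) = ((p i : ℝ) : ℂ) := by
        have h7 : ((t j : ℝ) : ℂ) * C j i = ((p i : ℝ) : ℂ) * C j i := by
          rw [h4]; ring
        exact mul_right_cancel₀ hz h7
      exact_mod_cast h6.symm
  -- conclusion
  constructor
  · rw [hre]
    have h1 := hle
    rw [hLHS, hRHS] at h1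
    linarith
  · rw [hre]
    constructor
    · intro h
      exact hforward (hScond.mp h)
    · intro h
      exact hScond.mpr (hback h)
end
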